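/- arXiv:1110.5140 — 5 statements merged into one kernel-verified Lean document; each statement's English description precedes it below -/
import Mathlib

section
/- Let H be a hypergraph in which every hyperedge contains at least k vertices and each hyperedge intersects at most d other hyperedges. If e(d + 2) ≤ 2^k (where e is Euler's number), then H is 2-colorable, i.e., the vertices can be colored with 2 colors so that no hyperedge is monochromatic. -/
open SimpleGraph Finset

/-- A proper coloring of a graph. -/
def ProperColoring {V α : Type*} (G : SimpleGraph V) (c : V → α) : Prop :=
  ∀ ⦃u v⦄, G.Adj u v → c u ≠ c v

/-- The chromatic number, as a natural number. -/
noncomputable def chi {V : Type*} (G : SimpleGraph V) : ℕ := sInf {n | G.Colorable n}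

/-- A dynamic coloring: proper, and every vertex of degree at least 2 sees
at least two distinct colors in its neighborhood. -/
def DynColoring {V α : Type*} (G : SimpleGraph V) [Fintype V] [DecidableRel G.Adj]
    (c : V → α) : Prop :=
  ProperColoring G c ∧ ∀ v, 2 ≤ G.degree v → ∃ u w, G.Adj v u ∧ G.Adj v w ∧ c u ≠ c w

/-- The dynamic chromatic number. -/
noncomputable def dynChi {V : Type*} (G : SimpleGraph V) [Fintype V] [DecidableRel G.Adj] : ℕ :=
  sInf {n | ∃ c : V → Fin n, DynColoring G c}

/-- The independence number. -/
noncomputable def alpha {V : Type*} (G : SimpleGraph V) : ℕ :=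
  sSup {n | ∃ s : Finset V, (∀ u ∈ s, ∀ v ∈ s, ¬ G.Adj u v) ∧ s.card = n}

/-- The square of a graph: distinct vertices adjacent iff at distance at most 2. -/
def graphSq {V : Type*} (G : SimpleGraph V) : SimpleGraph V where
  Adj u v := u ≠ v ∧ (G.Adj u v ∨ ∃ w, G.Adj u w ∧ G.Adj w v)
  symm := by
    constructor
    rintro u v ⟨h1, h2⟩
    refine ⟨h1.symm, ?_⟩
    rcases h2 with h | ⟨w, hw1, hw2⟩
    · exact .inl h.symm
    · exact .inr ⟨w, hw2.symm, hw1.symm⟩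
  loopless := by constructor; rintro u ⟨h, _⟩; exact h rfl

namespace Stmt1Aux

variable {V : Type*} [DecidableEq V]

def Mono (s e : Finset V) (b : Bool) : Prop := ∀ v ∈ e, (v ∈ s ↔ b = true)

instance (s e : Finset V) (b : Bool) : Decidable (Mono s e b) := by
  unfold Mono; infer_instance

def cap (W : Finset V) (T : Finset (Finset V × Bool)) : Finset (Finset V) :=
  W.powerset.filter (fun s => ∀ p ∈ T, ¬ Mono s p.1 p.2)

lemma mem_cap {W : Finset V} {T : Finset (Finset V × Bool)} {s : Finset V} :
    s ∈ cap W T ↔ s ⊆ W ∧ ∀ p ∈ T, ¬ Mono s p.1 p.2 := by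
  simp [cap]

lemma cap_anti {W : Finset V} {T1 T2 : Finset (Finset V × Bool)} (h : T1 ⊆ T2) :
    cap W T2 ⊆ cap W T1 := by
  intro s hs
  rw [mem_cap] at hs ⊢
  exact ⟨hs.1, fun p hp => hs.2 p (h hp)⟩

lemma cap_insert (W : Finset V) (p : Finset V × Bool) (T : Finset (Finset V × Bool)) :
    cap W (insert p T) = (cap W T).filter (fun s => ¬ Mono s p.1 p.2) := by
  ext s
  simp only [mem_cap, mem_filter]
  constructor
  · rintro ⟨h1, h2⟩
    exact ⟨⟨h1, fun q hq => h2 q (mem_insert_of_mem hq)⟩, h2 p (mem_insert_self _ _)⟩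
  · rintro ⟨⟨h1, h2⟩, h3⟩
    refine ⟨h1, fun q hq => ?_⟩
    rcases mem_insert.1 hq with rfl | hq
    · exact h3
    · exact h2 q hq

lemma card_cap_insert (W : Finset V) (p : Finset V × Bool) (T : Finset (Finset V × Bool)) :
    ((cap W T).filter (fun s => Mono s p.1 p.2)).card + (cap W (insert p T)).card
      = (cap W T).card := by
  rw [cap_insert]
  exact Finset.card_filter_add_card_filter_not _

/-- The lopsided correlation inequality, via an injection. -/
lemma shift {W e : Finset V} (heW : e ⊆ W) (b : Bool) {T : Finset (Finset V × Bool)}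
    (hT : ∀ p ∈ T, p.2 ≠ b → Disjoint p.1 e) :
    ((cap W T).filter (fun s => Mono s e b)).card * 2 ^ e.card ≤ (cap W T).card := by
  classical
  rw [← Finset.card_powerset e, ← Finset.card_product]
  cases b with
  | true =>
    apply Finset.card_le_card_of_injOn (fun q => q.1 \ q.2)
    · rintro ⟨s, t⟩ hst
      simp only [Finset.mem_coe, Finset.mem_product, mem_filter, Finset.mem_powerset, mem_cap] at hst
      obtain ⟨⟨⟨hsW, havoid⟩, hmono⟩, hte⟩ := hst
      have hes : e ⊆ s := fun v hv => (hmono v hv).2 rfl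
      rw [Finset.mem_coe, mem_cap]
      refine ⟨(Finset.sdiff_subset).trans hsW, fun p hp hm' => havoid p hp ?_⟩
      intro v hv
      by_cases hpb : p.2 = true
      · rw [hpb] at hm' ⊢
        exact ⟨fun _ => rfl, fun _ => (Finset.mem_sdiff.1 ((hm' v hv).2 rfl)).1⟩
      · have hdisj := hT p hp (by simpa using hpb)
        have hvt : v ∉ t := fun h => (Finset.disjoint_left.1 hdisj) hv (hte h)
        rw [← hm' v hv]
        simp [Finset.mem_sdiff, hvt]
    · rintro ⟨s1, t1⟩ h1 ⟨s2, t2⟩ h2 heq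
      simp only [Finset.mem_coe, Finset.mem_product, mem_filter, Finset.mem_powerset,
        mem_cap] at h1 h2
      obtain ⟨⟨⟨hs1W, hav1⟩, hm1⟩, ht1⟩ := h1
      obtain ⟨⟨⟨hs2W, hav2⟩, hm2⟩, ht2⟩ := h2
      have hes1 : e ⊆ s1 := fun v hv => (hm1 v hv).2 rfl
      have hes2 : e ⊆ s2 := fun v hv => (hm2 v hv).2 rfl
      simp only at heq
      have hrt : ∀ s t : Finset V, t ⊆ e → e ⊆ s → t = e \ (s \ t) := by
        intro s t hte hes
        ext v
        simp only [Finset.mem_sdiff, not_and, not_not]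
        constructor
        · intro h
          exact ⟨hte h, fun _ => h⟩
        · rintro ⟨hve, h⟩
          exact h (hes hve)
      have ht12 : t1 = t2 := by
        rw [hrt s1 t1 ht1 hes1, hrt s2 t2 ht2 hes2, heq]
      have hs12 : s1 = s2 := by
        have hrs : ∀ s t : Finset V, t ⊆ e → e ⊆ s → s = (s \ t) ∪ t := by
          intro s t hte hes
          ext v
          simp only [Finset.mem_union, Finset.mem_sdiff]
          constructor
          · intro h
            by_cases hvt : v ∈ t
            · exact Or.inr hvt
            · exact Or.inl ⟨h, hvt⟩
          · rintro (h | h)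
            · exact h.1
            · exact hes (hte h)
        rw [hrs s1 t1 ht1 hes1, hrs s2 t2 ht2 hes2, heq, ht12]
      exact Prod.ext hs12 ht12
  | false =>
    apply Finset.card_le_card_of_injOn (fun q => q.1 ∪ q.2)
    · rintro ⟨s, t⟩ hst
      simp only [Finset.mem_coe, Finset.mem_product, mem_filter, Finset.mem_powerset, mem_cap] at hst
      obtain ⟨⟨⟨hsW, havoid⟩, hmono⟩, hte⟩ := hst
      have hes : ∀ v ∈ e, v ∉ s := fun v hv h => by simpa using (hmono v hv).1 h
      rw [Finset.mem_coe, mem_cap]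
      refine ⟨Finset.union_subset hsW (hte.trans heW), fun p hp hm' => havoid p hp ?_⟩
      intro v hv
      by_cases hpb : p.2 = false
      · rw [hpb] at hm' ⊢
        exact ⟨fun hvs => (hm' v hv).1 (Finset.mem_union_left _ hvs),
          fun h => absurd h Bool.false_ne_true⟩
      · have hdisj := hT p hp (by simpa using hpb)
        have hve : v ∉ e := fun h => (Finset.disjoint_left.1 hdisj) hv h
        have hvt : v ∉ t := fun h => hve (hte h)
        rw [← hm' v hv]
        simp [Finset.mem_union, hvt]
    · rintro ⟨s1, t1⟩ h1 ⟨s2, t2⟩ h2 heq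
      simp only [Finset.mem_coe, Finset.mem_product, mem_filter, Finset.mem_powerset,
        mem_cap] at h1 h2
      obtain ⟨⟨⟨hs1W, hav1⟩, hm1⟩, ht1⟩ := h1
      obtain ⟨⟨⟨hs2W, hav2⟩, hm2⟩, ht2⟩ := h2
      have hes1 : ∀ v ∈ e, v ∉ s1 := fun v hv h => by simpa using (hm1 v hv).1 h
      have hes2 : ∀ v ∈ e, v ∉ s2 := fun v hv h => by simpa using (hm2 v hv).1 h
      simp only at heq
      have hrt : ∀ s t : Finset V, t ⊆ e → (∀ v ∈ e, v ∉ s) → t = (s ∪ t) ∩ e := by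
        intro s t hte hes
        ext v
        simp only [Finset.mem_inter, Finset.mem_union]
        constructor
        · intro h
          exact ⟨Or.inr h, hte h⟩
        · rintro ⟨h | h, hve⟩
          · exact absurd h (hes v hve)
          · exact h
      have hrs : ∀ s t : Finset V, t ⊆ e → (∀ v ∈ e, v ∉ s) → s = (s ∪ t) \ e := by
        intro s t hte hes
        ext v
        simp only [Finset.mem_sdiff, Finset.mem_union]
        constructor
        · intro h
          exact ⟨Or.inl h, fun hve => hes v hve h⟩
        · rintro ⟨h | h, hve⟩
          · exact h
          · exact absurd (hte h) hve
      have ht12 : t1 = t2 := by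
        rw [hrt s1 t1 ht1 hes1, hrt s2 t2 ht2 hes2, heq]
      have hs12 : s1 = s2 := by
        rw [hrs s1 t1 ht1 hes1, hrs s2 t2 ht2 hes2, heq]
      exact Prod.ext hs12 ht12


lemma numeric (d k : ℕ) (he : Real.exp 1 * ((d : ℝ) + 2) ≤ 2 ^ k) (m : ℕ) (hm : m ≤ d + 1) :
    1 ≤ (1 / ((d : ℝ) + 2)) * 2 ^ k * (1 - 1 / ((d : ℝ) + 2)) ^ m := by
  have hD : (0 : ℝ) < (d : ℝ) + 2 := by positivity
  have hd1 : (0 : ℝ) < (d : ℝ) + 1 := by positivity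
  have hx : (1 : ℝ) - 1 / ((d : ℝ) + 2) = ((d : ℝ) + 1) / ((d : ℝ) + 2) := by
    field_simp; ring
  have hx0 : (0 : ℝ) ≤ 1 - 1 / ((d : ℝ) + 2) := by rw [hx]; positivity
  have hx1 : (1 : ℝ) - 1 / ((d : ℝ) + 2) ≤ 1 := by
    have : (0:ℝ) ≤ 1 / ((d : ℝ) + 2) := by positivity
    linarith
  have hpow : (1 - 1 / ((d : ℝ) + 2)) ^ (d + 1) ≤ (1 - 1 / ((d : ℝ) + 2)) ^ m :=
    pow_le_pow_of_le_one hx0 hx1 hm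
  -- key : exp 1 * ((d+1)/(d+2))^(d+1) ≥ 1
  have hkey : 1 ≤ Real.exp 1 * (((d : ℝ) + 1) / ((d : ℝ) + 2)) ^ (d + 1) := by
    have h1 : ((d : ℝ) + 2) / ((d : ℝ) + 1) ≤ Real.exp (1 / ((d : ℝ) + 1)) := by
      have := Real.add_one_le_exp (1 / ((d : ℝ) + 1))
      have heq : ((d : ℝ) + 2) / ((d : ℝ) + 1) = 1 / ((d : ℝ) + 1) + 1 := by
        field_simp; ring
      rw [heq]; exact this
    have h2 : (((d : ℝ) + 2) / ((d : ℝ) + 1)) ^ (d + 1) ≤ Real.exp 1 := by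
      calc (((d : ℝ) + 2) / ((d : ℝ) + 1)) ^ (d + 1)
          ≤ (Real.exp (1 / ((d : ℝ) + 1))) ^ (d + 1) := by
            apply pow_le_pow_left₀ (by positivity) h1
        _ = Real.exp (((d : ℕ) + 1 : ℕ) * (1 / ((d : ℝ) + 1))) := by
            rw [Real.exp_nat_mul]
        _ = Real.exp 1 := by
            congr 1
            push_cast
            field_simp
    have h3 : (0 : ℝ) < (((d : ℝ) + 1) / ((d : ℝ) + 2)) ^ (d + 1) := by positivity
    have h4 : (((d : ℝ) + 2) / ((d : ℝ) + 1)) ^ (d + 1) * (((d : ℝ) + 1) / ((d : ℝ) + 2)) ^ (d + 1) = 1 := by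
      rw [← mul_pow]
      rw [div_mul_div_comm]
      rw [mul_comm ((d:ℝ)+2)]
      rw [div_self (by positivity)]
      exact one_pow _
    calc (1 : ℝ) = (((d : ℝ) + 2) / ((d : ℝ) + 1)) ^ (d + 1) * (((d : ℝ) + 1) / ((d : ℝ) + 2)) ^ (d + 1) := h4.symm
      _ ≤ Real.exp 1 * (((d : ℝ) + 1) / ((d : ℝ) + 2)) ^ (d + 1) := by
          apply mul_le_mul_of_nonneg_right h2 (le_of_lt h3)
  have h5 : Real.exp 1 ≤ (1 / ((d : ℝ) + 2)) * 2 ^ k := by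
    rw [one_div, inv_mul_eq_div, le_div_iff₀ hD]
    linarith [he]
  calc (1 : ℝ) ≤ Real.exp 1 * (((d : ℝ) + 1) / ((d : ℝ) + 2)) ^ (d + 1) := hkey
    _ = Real.exp 1 * (1 - 1 / ((d : ℝ) + 2)) ^ (d + 1) := by rw [hx]
    _ ≤ ((1 / ((d : ℝ) + 2)) * 2 ^ k) * (1 - 1 / ((d : ℝ) + 2)) ^ (d + 1) := by
        apply mul_le_mul_of_nonneg_right h5 (by positivity)
    _ ≤ ((1 / ((d : ℝ) + 2)) * 2 ^ k) * (1 - 1 / ((d : ℝ) + 2)) ^ m := by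
        apply mul_le_mul_of_nonneg_left hpow (by positivity)


lemma main {V : Type*} [DecidableEq V] {W : Finset V} {E : Finset (Finset V)} {k d : ℕ}
    (hW : ∀ e ∈ E, e ⊆ W)
    (hk : ∀ e ∈ E, k ≤ e.card)
    (hd : ∀ e ∈ E, (E.filter (fun f => f ≠ e ∧ (f ∩ e).Nonempty)).card ≤ d)
    (he : Real.exp 1 * ((d : ℝ) + 2) ≤ 2 ^ k) :
    ∀ (T : Finset (Finset V × Bool)), (∀ p ∈ T, p.1 ∈ E) →
      ∀ e ∈ E, ∀ b : Bool,
        (((cap W T).filter (fun s => Mono s e b)).card : ℝ)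
          ≤ 1 / ((d : ℝ) + 2) * (cap W T).card := by
  classical
  intro T
  induction T using Finset.strongInduction with
  | _ T ihT =>
  intro hTE e heE b
  set x : ℝ := 1 / ((d : ℝ) + 2) with hxdef
  have hD : (0 : ℝ) < (d : ℝ) + 2 := by positivity
  have hx0 : 0 < x := by rw [hxdef]; positivity
  have hx1 : x < 1 := by
    rw [hxdef, div_lt_one hD]; linarith
  set T1 : Finset (Finset V × Bool) := T.filter (fun p => p.2 ≠ b ∧ ¬ Disjoint p.1 e) with hT1
  set T2 : Finset (Finset V × Bool) := T.filter (fun p => ¬ (p.2 ≠ b ∧ ¬ Disjoint p.1 e)) with hT2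
  have hT1sub : T1 ⊆ T := Finset.filter_subset _ _
  have hT2sub : T2 ⊆ T := Finset.filter_subset _ _
  have hT12 : T2 ∪ T1 = T := by
    ext p
    simp only [hT1, hT2, Finset.mem_union, Finset.mem_filter]
    tauto
  -- Step A : lopsided bound
  have stepA : (((cap W T).filter (fun s => Mono s e b)).card : ℝ) * 2 ^ k
      ≤ ((cap W T2).card : ℝ) := by
    have h1 : ((cap W T).filter (fun s => Mono s e b)).card
        ≤ ((cap W T2).filter (fun s => Mono s e b)).card := by
      apply Finset.card_le_card
      apply Finset.filter_subset_filter
      exact cap_anti hT2sub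
    have h2 : ((cap W T2).filter (fun s => Mono s e b)).card * 2 ^ e.card
        ≤ (cap W T2).card := by
      apply shift (hW e heE) b
      intro p hp hpb
      rw [hT2, Finset.mem_filter] at hp
      by_contra hnd
      exact hp.2 ⟨hpb, hnd⟩
    have h3 : ((cap W T).filter (fun s => Mono s e b)).card * 2 ^ k
        ≤ ((cap W T2).filter (fun s => Mono s e b)).card * 2 ^ e.card := by
      apply Nat.mul_le_mul h1
      exact Nat.pow_le_pow_right (by norm_num) (hk e heE)
    have := le_trans h3 h2
    calc (((cap W T).filter (fun s => Mono s e b)).card : ℝ) * 2 ^ k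
        = ((((cap W T).filter (fun s => Mono s e b)).card * 2 ^ k : ℕ) : ℝ) := by push_cast; ring
      _ ≤ ((cap W T2).card : ℝ) := by exact_mod_cast this
  -- Step B : peel off T1 one by one
  have stepB : ∀ S : Finset (Finset V × Bool), S ⊆ T1 →
      ((cap W T2).card : ℝ) * (1 - x) ^ S.card ≤ ((cap W (T2 ∪ S)).card : ℝ) := by
    intro S
    induction S using Finset.induction_on with
    | empty => simp
    | @insert q S' hq ih =>
      intro hsub
      have hq1 : q ∈ T1 := hsub (mem_insert_self _ _)
      have hS'sub : S' ⊆ T1 := fun r hr => hsub (mem_insert_of_mem hr)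
      have hU : T2 ∪ insert q S' = insert q (T2 ∪ S') := by
        rw [Finset.union_insert]
      have hqT2 : q ∉ T2 := by
        rw [hT1, Finset.mem_filter] at hq1
        rw [hT2, Finset.mem_filter]
        intro h
        exact h.2 hq1.2
      have hUT : T2 ∪ S' ⊂ T := by
        constructor
        · exact Finset.union_subset hT2sub (hS'sub.trans hT1sub)
        · intro hTsub
          have : q ∈ T2 ∪ S' := hTsub (hT1sub hq1)
          rcases Finset.mem_union.1 this with h | h
          · exact hqT2 h
          · exact hq h
      have hUE : ∀ p ∈ T2 ∪ S', p.1 ∈ E := by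
        intro p hp
        rcases Finset.mem_union.1 hp with h | h
        · exact hTE p (hT2sub h)
        · exact hTE p (hT1sub (hS'sub h))
      have hq1E : q.1 ∈ E := hTE q (hT1sub hq1)
      have hmain := ihT (T2 ∪ S') hUT hUE q.1 hq1E q.2
      have hins := card_cap_insert W q (T2 ∪ S')
      have hcast : ((cap W (insert q (T2 ∪ S'))).card : ℝ)
          = ((cap W (T2 ∪ S')).card : ℝ)
            - (((cap W (T2 ∪ S')).filter (fun s => Mono s q.1 q.2)).card : ℝ) := by
        have h2 : ((((cap W (T2 ∪ S')).filter (fun s => Mono s q.1 q.2)).card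
            + (cap W (insert q (T2 ∪ S'))).card : ℕ) : ℝ)
            = ((cap W (T2 ∪ S')).card : ℝ) := by rw [hins]
        push_cast at h2
        linarith
      have hgoal : ((cap W (T2 ∪ S')).card : ℝ) * (1 - x)
          ≤ ((cap W (insert q (T2 ∪ S'))).card : ℝ) := by
        rw [hcast]
        have : x * ((cap W (T2 ∪ S')).card : ℝ)
            ≥ (((cap W (T2 ∪ S')).filter (fun s => Mono s q.1 q.2)).card : ℝ) := hmain
        nlinarith [this]
      have hih := ih hS'sub
      rw [Finset.card_insert_of_notMem hq, hU]
      calc ((cap W T2).card : ℝ) * (1 - x) ^ (S'.card + 1)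
          = (((cap W T2).card : ℝ) * (1 - x) ^ S'.card) * (1 - x) := by ring
        _ ≤ ((cap W (T2 ∪ S')).card : ℝ) * (1 - x) := by
            apply mul_le_mul_of_nonneg_right hih (by linarith)
        _ ≤ ((cap W (insert q (T2 ∪ S'))).card : ℝ) := hgoal
  -- Step C : |T1| ≤ d + 1
  have stepC : T1.card ≤ d + 1 := by
    have hinj : T1.card ≤ (E.filter (fun f => ¬ Disjoint f e)).card := by
      apply Finset.card_le_card_of_injOn (fun p => p.1)
      · intro p hp
        simp only [Finset.mem_coe, hT1, Finset.mem_filter] at hp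
        rw [Finset.mem_coe, Finset.mem_filter]
        exact ⟨hTE p (hp.1), hp.2.2⟩
      · intro p hp q hq hpq
        simp only [Finset.mem_coe, hT1, Finset.mem_filter] at hp hq
        have hb : p.2 = q.2 := by
          have h1 := hp.2.1; have h2 := hq.2.1
          revert h1 h2
          cases p.2 <;> cases q.2 <;> cases b <;> simp
        exact Prod.ext hpq hb
    have hsub2 : E.filter (fun f => ¬ Disjoint f e)
        ⊆ insert e (E.filter (fun f => f ≠ e ∧ (f ∩ e).Nonempty)) := by
      intro f hf
      rw [Finset.mem_filter] at hf
      by_cases hfe : f = e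
      · subst hfe; exact mem_insert_self _ _
      · apply mem_insert_of_mem
        rw [Finset.mem_filter]
        refine ⟨hf.1, hfe, ?_⟩
        rw [← Finset.not_disjoint_iff_nonempty_inter]
        exact hf.2
    calc T1.card ≤ (E.filter (fun f => ¬ Disjoint f e)).card := hinj
      _ ≤ (insert e (E.filter (fun f => f ≠ e ∧ (f ∩ e).Nonempty))).card :=
          Finset.card_le_card hsub2
      _ ≤ (E.filter (fun f => f ≠ e ∧ (f ∩ e).Nonempty)).card + 1 :=
          Finset.card_insert_le _ _
      _ ≤ d + 1 := by
          have := hd e heE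
          omega
  -- Combine
  have hBfull := stepB T1 (Finset.Subset.refl T1)
  rw [hT12] at hBfull
  have hnum := numeric d k he T1.card stepC
  set cA : ℝ := (((cap W T).filter (fun s => Mono s e b)).card : ℝ) with hcA
  have hcA0 : 0 ≤ cA := by rw [hcA]; positivity
  have key1 : cA * 2 ^ k * (1 - x) ^ T1.card ≤ ((cap W T).card : ℝ) := by
    calc cA * 2 ^ k * (1 - x) ^ T1.card
        ≤ ((cap W T2).card : ℝ) * (1 - x) ^ T1.card := by
          apply mul_le_mul_of_nonneg_right stepA (pow_nonneg (by linarith) _)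
      _ ≤ ((cap W T).card : ℝ) := hBfull
  calc cA = cA * 1 := by ring
    _ ≤ cA * (x * 2 ^ k * (1 - x) ^ T1.card) := by
        apply mul_le_mul_of_nonneg_left _ hcA0
        exact hnum
    _ = x * (cA * 2 ^ k * (1 - x) ^ T1.card) := by ring
    _ ≤ x * ((cap W T).card : ℝ) := by
        apply mul_le_mul_of_nonneg_left key1 (le_of_lt hx0)
    _ = 1 / ((d : ℝ) + 2) * (cap W T).card := by rw [hxdef]

lemma pos_cap {V : Type*} [DecidableEq V] {W : Finset V} {E : Finset (Finset V)} {k d : ℕ}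
    (hW : ∀ e ∈ E, e ⊆ W)
    (hk : ∀ e ∈ E, k ≤ e.card)
    (hd : ∀ e ∈ E, (E.filter (fun f => f ≠ e ∧ (f ∩ e).Nonempty)).card ≤ d)
    (he : Real.exp 1 * ((d : ℝ) + 2) ≤ 2 ^ k) :
    ∀ T : Finset (Finset V × Bool), (∀ p ∈ T, p.1 ∈ E) → 0 < (cap W T).card := by
  intro T
  induction T using Finset.induction_on with
  | empty =>
    intro _
    have hcap : cap W ∅ = W.powerset := by
      ext s; rw [mem_cap]; simp
    rw [hcap, Finset.card_powerset]
    positivity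
  | @insert q T hq ih =>
    intro hTE
    have hTE' : ∀ p ∈ T, p.1 ∈ E := fun p hp => hTE p (mem_insert_of_mem hp)
    have hqE : q.1 ∈ E := hTE q (mem_insert_self _ _)
    have hm := main hW hk hd he T hTE' q.1 hqE q.2
    have hins := card_cap_insert W q T
    have hT0 : 0 < (cap W T).card := ih hTE'
    have hD : (0 : ℝ) < (d : ℝ) + 2 := by positivity
    have hx1 : 1 / ((d : ℝ) + 2) < 1 := by
      rw [div_lt_one hD]; linarith
    have hcast : ((((cap W T).filter (fun s => Mono s q.1 q.2)).card
        + (cap W (insert q T)).card : ℕ) : ℝ) = ((cap W T).card : ℝ) := by rw [hins]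
    push_cast at hcast
    have hT0R : (0 : ℝ) < ((cap W T).card : ℝ) := by exact_mod_cast hT0
    have : (0 : ℝ) < ((cap W (insert q T)).card : ℝ) := by nlinarith
    exact_mod_cast this
end Stmt1Aux

/-- A hypergraph (vertex set V, hyperedges E) in which every hyperedge
has at least k vertices and meets at most d other hyperedges, with e(d+2) ≤ 2^k,
is 2-colorable. -/



theorem stmt1 {V : Type*} [DecidableEq V] (E : Finset (Finset V)) (k d : ℕ)
    (hk : ∀ e ∈ E, k ≤ e.card)
    (hd : ∀ e ∈ E, (E.filter (fun f => f ≠ e ∧ (f ∩ e).Nonempty)).card ≤ d)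
    (he : Real.exp 1 * ((d : ℝ) + 2) ≤ 2 ^ k) :
    ∃ c : V → Bool, ∀ e ∈ E, (∃ v ∈ e, c v = true) ∧ (∃ v ∈ e, c v = false) := by
  classical
  set W : Finset V := E.sup id with hWdef
  have hW : ∀ e ∈ E, e ⊆ W := fun e heE => Finset.le_sup (f := id) heE
  set Tall : Finset (Finset V × Bool) := E ×ˢ (Finset.univ : Finset Bool) with hTall
  have hTE : ∀ p ∈ Tall, p.1 ∈ E := by
    intro p hp
    exact (Finset.mem_product.1 hp).1
  have hpos := Stmt1Aux.pos_cap hW hk hd he Tall hTE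
  obtain ⟨s, hs⟩ := Finset.card_pos.1 hpos
  rw [Stmt1Aux.mem_cap] at hs
  obtain ⟨hsW, havoid⟩ := hs
  refine ⟨fun v => decide (v ∈ s), fun e heE => ?_⟩
  constructor
  · have h := havoid (e, false) (Finset.mem_product.2 ⟨heE, Finset.mem_univ _⟩)
    simp only [Stmt1Aux.Mono, not_forall] at h
    obtain ⟨v, hv, hneg⟩ := h
    refine ⟨v, hv, ?_⟩
    simp only [decide_eq_true_eq]
    by_contra hvs
    exact hneg (by simp [hvs])
  · have h := havoid (e, true) (Finset.mem_product.2 ⟨heE, Finset.mem_univ _⟩)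
    simp only [Stmt1Aux.Mono, not_forall] at h
    obtain ⟨v, hv, hneg⟩ := h
    refine ⟨v, hv, ?_⟩
    simp only [decide_eq_false_iff_not]
    intro hvs
    exact hneg (by simp [hvs])
end

section
/- For any graph G with χ(G) ≥ 4, the dynamic chromatic number satisfies χ₂(G) ≤ χ(G) + α(G), where α(G) is the independence number of G. -/
open SimpleGraph Finset

/-- For any graph G with χ(G) ≥ 4, χ₂(G) ≤ χ(G) + α(G). -/
theorem stmt5 {V : Type*} [Fintype V] (G : SimpleGraph V) [DecidableRel G.Adj]
    (h : 4 ≤ chi G) :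
    dynChi G ≤ chi G + alpha G := by
  classical
  -- basic facts about chi
  have hcardcol : G.Colorable (Fintype.card V) :=
    ⟨SimpleGraph.Coloring.mk (fun v => Fintype.equivFin V v)
      (fun {v w} hadj hh => hadj.ne ((Fintype.equivFin V).injective hh))⟩
  have hchilecard : chi G ≤ Fintype.card V := Nat.sInf_le hcardcol
  have hVne : Nonempty V := Fintype.card_pos_iff.mp (by omega)
  have hk4 : 4 ≤ chi G := h
  set k := chi G with hkdef
  have hcolk : G.Colorable k := by
    have := Nat.sInf_mem (s := {n | G.Colorable n}) ⟨_, hcardcol⟩; exact this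
  obtain ⟨C⟩ := hcolk
  set A := alpha G with hAdef
  have hbddA : BddAbove {n | ∃ s : Finset V, (∀ u ∈ s, ∀ v ∈ s, ¬ G.Adj u v) ∧ s.card = n} := by
    refine ⟨Fintype.card V, ?_⟩
    rintro n ⟨s, _, rfl⟩
    simpa using s.card_le_univ
  have hA1 : 1 ≤ A := by
    refine le_csSup hbddA ⟨{Classical.arbitrary V}, ?_, by simp⟩
    intro u hu w hw
    simp only [Finset.mem_singleton] at hu hw
    subst hu; subst hw; exact G.loopless.irrefl _
  -- minimal-bad proper coloring
  set Bad : (V → Fin k) → Finset V := fun f => univ.filter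
    (fun v => 2 ≤ G.degree v ∧ ∀ u ∈ G.neighborFinset v, ∀ w ∈ G.neighborFinset v, f u = f w)
    with hBadDef
  set P : Finset (V → Fin k) := univ.filter (fun f => ProperColoring G f) with hPdef
  have hCP : ⇑C ∈ P := by
    rw [hPdef, mem_filter]
    exact ⟨mem_univ _, fun u v hadj => C.valid hadj⟩
  obtain ⟨c₀, hc₀mem, hmin⟩ := P.exists_min_image (fun f => (Bad f).card) ⟨_, hCP⟩
  have hc₀P : ProperColoring G c₀ := by
    rw [hPdef, mem_filter] at hc₀mem; exact hc₀mem.2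
  -- special colors
  set kTop : Fin k := ⟨k - 1, by omega⟩ with hkTop
  set μ : Fin k → Fin k := fun a => if a = ⟨0, by omega⟩ then ⟨1, by omega⟩ else ⟨0, by omega⟩
    with hμdef
  have hμne : ∀ a, μ a ≠ a := by
    intro a
    rw [hμdef]; simp only
    by_cases ha : a = ⟨0, by omega⟩
    · rw [if_pos ha, ha]
      intro e; have := congrArg Fin.val e; simp at this
    · rw [if_neg ha]; exact fun e => ha e.symm
  have hμK : ∀ a, μ a ≠ kTop := by
    intro a
    rw [hμdef, hkTop]; simp only
    by_cases ha : a = ⟨0, by omega⟩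
    · rw [if_pos ha]; intro e; have := congrArg Fin.val e; simp at this; omega
    · rw [if_neg ha]; intro e; have := congrArg Fin.val e; simp at this; omega
  -- maximal independent set containing the top color class
  set classK : Finset V := univ.filter (fun v => c₀ v = kTop) with hclassKdef
  set Fam : Finset (Finset V) := univ.powerset.filter
    (fun s => classK ⊆ s ∧ ∀ u ∈ s, ∀ w ∈ s, ¬ G.Adj u w) with hFamdef
  have hclassKmem : classK ∈ Fam := by
    rw [hFamdef, mem_filter]
    refine ⟨mem_powerset.mpr (subset_univ _), subset_rfl, ?_⟩
    intro u hu w hw hadj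
    rw [hclassKdef, mem_filter] at hu hw
    exact hc₀P hadj (hu.2.trans hw.2.symm)
  obtain ⟨I, hIF, hImax⟩ := Fam.exists_max_image Finset.card ⟨_, hclassKmem⟩
  have hIK : classK ⊆ I := by
    rw [hFamdef, mem_filter] at hIF; exact hIF.2.1
  have hIind : ∀ u ∈ I, ∀ w ∈ I, ¬ G.Adj u w := by
    rw [hFamdef, mem_filter] at hIF; exact hIF.2.2
  have hIdom : ∀ x, x ∉ I → ∃ y ∈ I, G.Adj x y := by
    intro x hx
    by_contra hno
    push_neg at hno
    have hins : insert x I ∈ Fam := by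
      rw [hFamdef, mem_filter]
      refine ⟨mem_powerset.mpr (subset_univ _), hIK.trans (subset_insert _ _), ?_⟩
      intro u hu w hw
      rcases mem_insert.mp hu with rfl | hu'
      · rcases mem_insert.mp hw with rfl | hw'
        · exact G.loopless.irrefl _
        · exact hno _ hw'
      · rcases mem_insert.mp hw with rfl | hw'
        · intro hadj; exact hno _ hu' hadj.symm
        · exact hIind _ hu' _ hw'
    have := hImax _ hins
    rw [Finset.card_insert_of_notMem hx] at this
    omega
  have hIA : I.card ≤ A := le_csSup hbddA ⟨I, hIind, rfl⟩
  -- bad vertices inside I, and the residual problem set Z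
  set Bset : Finset V := I.filter
    (fun v => 2 ≤ G.degree v ∧ ∀ u ∈ G.neighborFinset v, ∀ w ∈ G.neighborFinset v, c₀ u = c₀ w)
    with hBsetdef
  have hBsubI : Bset ⊆ I := filter_subset _ _
  have hBdeg : ∀ b ∈ Bset, 2 ≤ G.degree b := by
    intro b hb; rw [hBsetdef, mem_filter] at hb; exact hb.2.1
  have hBmono : ∀ b ∈ Bset, ∀ u ∈ G.neighborFinset b, ∀ w ∈ G.neighborFinset b, c₀ u = c₀ w := by
    intro b hb; rw [hBsetdef, mem_filter] at hb; exact hb.2.2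
  have hplainK : ∀ x, x ∉ I → c₀ x ≠ kTop := by
    intro x hx he
    exact hx (hIK (by rw [hclassKdef, mem_filter]; exact ⟨mem_univ _, he⟩))
  set Zset : Finset V := univ.filter
    (fun x => x ∉ I ∧ 2 ≤ G.degree x ∧ G.neighborFinset x ⊆ Bset) with hZdef
  have hZsub : ∀ x ∈ Zset, G.neighborFinset x ⊆ Bset := by
    intro x hx; rw [hZdef, mem_filter] at hx; exact hx.2.2.2
  have hZdeg : ∀ x ∈ Zset, 2 ≤ G.degree x := by
    intro x hx; rw [hZdef, mem_filter] at hx; exact hx.2.2.1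
  have hZI : ∀ x ∈ Zset, x ∉ I := by
    intro x hx; rw [hZdef, mem_filter] at hx; exact hx.2.1
  -- rainbow lemma from minimality
  have hrainbow : ∀ x ∈ Zset, ∀ t : Fin k, t ≠ c₀ x → ∃ b ∈ G.neighborFinset x, c₀ b = t := by
    intro x hx t ht
    by_contra hno
    push_neg at hno
    set c₁ : V → Fin k := Function.update c₀ x t with hc₁def
    have hc₁x : c₁ x = t := by rw [hc₁def]; simp
    have hc₁ne : ∀ y, y ≠ x → c₁ y = c₀ y := by
      intro y hy; rw [hc₁def]; exact Function.update_of_ne hy _ _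
    have hc₁P : ProperColoring G c₁ := by
      intro u w hadj heq
      by_cases hu : u = x
      · subst hu
        have hwx : w ≠ u := fun e => hadj.ne e.symm
        rw [hc₁x, hc₁ne w hwx] at heq
        exact hno w (by rw [mem_neighborFinset]; exact hadj) heq.symm
      · by_cases hw : w = x
        · subst hw
          rw [hc₁ne u hu, hc₁x] at heq
          exact hno u (by rw [mem_neighborFinset]; exact hadj.symm) heq
        · rw [hc₁ne u hu, hc₁ne w hw] at heq
          exact hc₀P hadj heq
    have hc₁mem : c₁ ∈ P := by rw [hPdef, mem_filter]; exact ⟨mem_univ _, hc₁P⟩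
    have hsub : Bad c₁ ⊆ Bad c₀ := by
      intro w hw
      rw [hBadDef, mem_filter] at hw ⊢
      obtain ⟨-, hdeg, hmono⟩ := hw
      by_cases hwN : w ∈ G.neighborFinset x
      · have hwB : w ∈ Bset := hZsub x hx hwN
        rw [hBsetdef, mem_filter] at hwB
        exact ⟨mem_univ _, hwB.2⟩
      · refine ⟨mem_univ _, hdeg, ?_⟩
        intro u hu w' hw'
        have hux : u ≠ x := by
          intro e; subst e
          exact hwN (by rw [mem_neighborFinset] at hu ⊢; exact hu.symm)
        have hw'x : w' ≠ x := by
          intro e; subst e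
          exact hwN (by rw [mem_neighborFinset] at hw' ⊢; exact hw'.symm)
        rw [← hc₁ne u hux, ← hc₁ne w' hw'x]
        exact hmono u hu w' hw'
    have hdegx : 2 ≤ (G.neighborFinset x).card := hZdeg x hx
    have hNne : (G.neighborFinset x).Nonempty := Finset.card_pos.mp (by omega)
    obtain ⟨b₀, hb₀⟩ := hNne
    have hb₀B : b₀ ∈ Bset := hZsub x hx hb₀
    have hb₀bad : b₀ ∈ Bad c₀ := by
      rw [hBadDef, mem_filter]
      rw [hBsetdef, mem_filter] at hb₀B
      exact ⟨mem_univ _, hb₀B.2⟩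
    have hb₀not : b₀ ∉ Bad c₁ := by
      rw [hBadDef, mem_filter]
      rintro ⟨-, -, hmono⟩
      have hxb : x ∈ G.neighborFinset b₀ := by
        rw [mem_neighborFinset] at hb₀ ⊢; exact hb₀.symm
      have h2 : 2 ≤ (G.neighborFinset b₀).card := hBdeg b₀ hb₀B
      obtain ⟨y, hy, hyx⟩ := Finset.exists_mem_ne (s := G.neighborFinset b₀) (by omega) x
      have he1 := hmono x hxb y hy
      rw [hc₁x, hc₁ne y hyx] at he1
      have he2 := hBmono b₀ hb₀B y hy x hxb
      exact ht (he1.trans he2)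
    have hlt : (Bad c₁).card < (Bad c₀).card :=
      Finset.card_lt_card ((Finset.ssubset_iff_of_subset hsub).mpr ⟨b₀, hb₀bad, hb₀not⟩)
    have := hmin c₁ hc₁mem
    omega
  -- neighbor choice functions
  set nF : V → V := fun b => if hb : (G.neighborFinset b).Nonempty then hb.choose
    else Classical.arbitrary V with hnFdef
  have hnF : ∀ b, (G.neighborFinset b).Nonempty → nF b ∈ G.neighborFinset b := by
    intro b hb; rw [hnFdef]; simp only; rw [dif_pos hb]; exact hb.choose_spec
  set aF : V → Fin k := fun b => c₀ (nF b) with haFdef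
  set x₀ : V := if hz : Zset.Nonempty then hz.choose else Classical.arbitrary V with hx₀def
  have hx₀Z : Zset.Nonempty → x₀ ∈ Zset := by
    intro hz; rw [hx₀def, dif_pos hz]; exact hz.choose_spec
  set b₁ : V := if hb : (G.neighborFinset x₀).Nonempty then hb.choose
    else Classical.arbitrary V with hb₁def
  have hb₁N : Zset.Nonempty → b₁ ∈ G.neighborFinset x₀ := by
    intro hz
    have h2 : 2 ≤ (G.neighborFinset x₀).card := hZdeg _ (hx₀Z hz)
    have hne : (G.neighborFinset x₀).Nonempty := Finset.card_pos.mp (by omega)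
    rw [hb₁def, dif_pos hne]; exact hne.choose_spec
  set b₂ : V := if hb : ∃ y ∈ G.neighborFinset x₀, y ≠ b₁ then hb.choose
    else Classical.arbitrary V with hb₂def
  have hb₂N : Zset.Nonempty → b₂ ∈ G.neighborFinset x₀ ∧ b₂ ≠ b₁ := by
    intro hz
    have h2 : 2 ≤ (G.neighborFinset x₀).card := hZdeg _ (hx₀Z hz)
    have hex : ∃ y ∈ G.neighborFinset x₀, y ≠ b₁ :=
      Finset.exists_mem_ne (by omega) b₁
    rw [hb₂def, dif_pos hex]; exact hex.choose_spec
  set uF : V → V := fun b => if Zset.Nonempty ∧ (b = b₁ ∨ b = b₂) then x₀ else nF b with huFdef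
  have hUFmem : ∀ b ∈ Bset, uF b ∈ G.neighborFinset b := by
    intro b hb
    rw [huFdef]; simp only
    by_cases hc : Zset.Nonempty ∧ (b = b₁ ∨ b = b₂)
    · rw [if_pos hc]
      obtain ⟨hz, hbor⟩ := hc
      have h₁ := hb₁N hz
      have h₂ := (hb₂N hz).1
      rw [mem_neighborFinset] at h₁ h₂ ⊢
      rcases hbor with rfl | rfl
      · exact h₁.symm
      · exact h₂.symm
    · rw [if_neg hc]
      have h2 : 2 ≤ (G.neighborFinset b).card := hBdeg b hb
      exact hnF b (Finset.card_pos.mp (by omega))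
  set Uset : Finset V := Bset.image uF with hUdef
  have hUI : ∀ w ∈ Uset, w ∉ I := by
    intro w hw
    rw [hUdef, mem_image] at hw
    obtain ⟨b, hb, rfl⟩ := hw
    intro hwI
    have hadj : G.Adj b (uF b) := by
      rw [← mem_neighborFinset]; exact hUFmem b hb
    exact hIind b (hBsubI hb) _ hwI hadj
  set rep : V → V := fun w => if hw : ∃ b ∈ Bset, uF b = w then hw.choose
    else Classical.arbitrary V with hrepdef
  have hrep : ∀ w ∈ Uset, rep w ∈ Bset ∧ uF (rep w) = w := by
    intro w hw
    rw [hUdef, mem_image] at hw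
    have hex : ∃ b ∈ Bset, uF b = w := hw
    rw [hrepdef]; simp only; rw [dif_pos hex]
    exact hex.choose_spec
  have hrepB : ∀ w ∈ Uset, rep w ∈ Bset := fun w hw => (hrep w hw).1
  have hrepinj : ∀ w ∈ Uset, ∀ w' ∈ Uset, rep w = rep w' → w = w' := by
    intro w hw w' hw' he
    have h1 := (hrep w hw).2
    have h2 := (hrep w' hw').2
    rw [← h1, ← h2, he]
  set SectB : Finset V := Bset.filter (fun b => rep (uF b) = b) with hSectdef
  have hSect : ∀ w ∈ Uset, rep w ∈ SectB := by
    intro w hw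
    rw [hSectdef, mem_filter]
    refine ⟨(hrep w hw).1, ?_⟩
    rw [(hrep w hw).2]
  set D : Finset V := (I \ Bset) ∪ SectB with hDdef
  have hDsubI : D ⊆ I := by
    intro w hw
    rw [hDdef, mem_union] at hw
    rcases hw with hw | hw
    · exact (mem_sdiff.mp hw).1
    · rw [hSectdef] at hw; exact hBsubI (filter_subset _ _ hw)
  have hIBD : ∀ w, w ∈ I → w ∉ Bset → w ∈ D := by
    intro w h1 h2; rw [hDdef, mem_union]; exact Or.inl (mem_sdiff.mpr ⟨h1, h2⟩)
  have hUD : ∀ w ∈ Uset, rep w ∈ D := by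
    intro w hw; rw [hDdef, mem_union]; exact Or.inr (hSect w hw)
  have hDA : D.card ≤ A := le_trans (Finset.card_le_card hDsubI) hIA
  have hDltA : Zset.Nonempty → D.card < A := by
    intro hz
    have hx₀ := hx₀Z hz
    have h₁N := hb₁N hz
    obtain ⟨h₂N, h₂ne⟩ := hb₂N hz
    have hb₁B : b₁ ∈ Bset := hZsub _ hx₀ h₁N
    have hb₂B : b₂ ∈ Bset := hZsub _ hx₀ h₂N
    have huF₁ : uF b₁ = x₀ := if_pos ⟨hz, Or.inl rfl⟩
    have huF₂ : uF b₂ = x₀ := if_pos ⟨hz, Or.inr rfl⟩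
    have hx₀U : x₀ ∈ Uset := by
      rw [hUdef]; exact mem_image.mpr ⟨b₁, hb₁B, huF₁⟩
    by_cases hrb : rep x₀ = b₁
    · have hnotD : b₂ ∉ D := by
        intro hD
        rw [hDdef, mem_union] at hD
        rcases hD with hmem | hmem
        · exact (mem_sdiff.mp hmem).2 hb₂B
        · rw [hSectdef, mem_filter] at hmem
          have := hmem.2
          rw [huF₂] at this
          exact h₂ne (by rw [← this, hrb])
      have hss : D ⊂ I := (Finset.ssubset_iff_of_subset hDsubI).mpr
        ⟨b₂, hBsubI hb₂B, hnotD⟩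
      exact lt_of_lt_of_le (Finset.card_lt_card hss) hIA
    · have hnotD : b₁ ∉ D := by
        intro hD
        rw [hDdef, mem_union] at hD
        rcases hD with hmem | hmem
        · exact (mem_sdiff.mp hmem).2 hb₁B
        · rw [hSectdef, mem_filter] at hmem
          have := hmem.2
          rw [huF₁] at this
          exact hrb this
      have hss : D ⊂ I := (Finset.ssubset_iff_of_subset hDsubI).mpr
        ⟨b₁, hBsubI hb₁B, hnotD⟩
      exact lt_of_lt_of_le (Finset.card_lt_card hss) hIA
  -- fresh color assignment
  have hDA' : Fintype.card {x // x ∈ D} ≤ A := by rw [Fintype.card_coe]; exact hDA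
  set eD := Fintype.equivFin {x // x ∈ D} with heDdef
  set φ : V → Fin A := fun v => if hv : v ∈ D then
      ⟨(eD ⟨v, hv⟩).val, lt_of_lt_of_le (eD ⟨v, hv⟩).isLt hDA'⟩
    else ⟨0, hA1⟩ with hφdef
  have hφeq : ∀ v, ∀ hv : v ∈ D,
      φ v = ⟨(eD ⟨v, hv⟩).val, lt_of_lt_of_le (eD ⟨v, hv⟩).isLt hDA'⟩ := by
    intro v hv
    simp only [hφdef]
    exact dif_pos hv
  have hφval : ∀ v, v ∈ D → (φ v).val < D.card := by
    intro v hv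
    rw [hφeq v hv]
    show (eD ⟨v, hv⟩).val < D.card
    have h1 := (eD ⟨v, hv⟩).isLt
    have h2 : Fintype.card {x // x ∈ D} = D.card := Fintype.card_coe D
    omega
  have hφinj : ∀ v ∈ D, ∀ w ∈ D, φ v = φ w → v = w := by
    intro v hv w hw he
    rw [hφeq v hv, hφeq w hw] at he
    have h1 : (eD ⟨v, hv⟩).val = (eD ⟨w, hw⟩).val := Fin.mk_eq_mk.mp he
    have h2 : eD ⟨v, hv⟩ = eD ⟨w, hw⟩ := Fin.val_injective h1
    have h3 := eD.injective h2
    exact Subtype.mk_eq_mk.mp h3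
  set ff : Fin A := if hlt : D.card < A then ⟨D.card, hlt⟩ else ⟨0, hA1⟩ with hffdef
  have hφff : Zset.Nonempty → ∀ v ∈ D, φ v ≠ ff := by
    intro hz v hv he
    have hlt := hDltA hz
    rw [hffdef, dif_pos hlt] at he
    have := hφval v hv
    rw [he] at this
    simp at this
  -- the recolored set R
  set R : Finset V := Bset.filter
    (fun b => c₀ b = μ (aF b) ∧ ∃ x ∈ Zset, b ∈ G.neighborFinset x) with hRdef
  have hRsubB : R ⊆ Bset := filter_subset _ _
  have hRZ : ∀ w ∈ R, Zset.Nonempty := by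
    intro w hw; rw [hRdef, mem_filter] at hw
    obtain ⟨-, -, x, hx, -⟩ := hw; exact ⟨x, hx⟩
  -- palette embeddings
  set old : Fin k → Fin (k + A) := fun i => Fin.castAdd A i with holddef
  set fr : Fin A → Fin (k + A) := fun j => Fin.natAdd k j with hfrdef
  have hOF : ∀ i j, old i ≠ fr j := by
    intro i j he
    have hv := congrArg Fin.val he
    simp only [holddef, hfrdef, Fin.coe_castAdd, Fin.coe_natAdd] at hv
    have := i.isLt
    omega
  have hOinj : ∀ i j : Fin k, old i = old j → i = j := by
    intro i j he
    have hv := congrArg Fin.val he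
    simp only [holddef, Fin.coe_castAdd] at hv
    exact Fin.val_injective hv
  have hFinj : ∀ i j : Fin A, fr i = fr j → i = j := by
    intro i j he
    have hv := congrArg Fin.val he
    simp only [hfrdef, Fin.coe_natAdd] at hv
    exact Fin.val_injective (by omega)
  -- the final coloring
  set cStar : V → Fin (k + A) := fun w =>
    if w ∈ R then fr ff
    else if w ∈ Bset then old kTop
    else if w ∈ I then fr (φ w)
    else if w ∈ Uset then fr (φ (rep w))
    else old (c₀ w) with hcStardef
  have eR : ∀ w ∈ R, cStar w = fr ff := by
    intro w hw; rw [hcStardef]; simp only; rw [if_pos hw]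
  have eB : ∀ w, w ∈ Bset → w ∉ R → cStar w = old kTop := by
    intro w hw hw'; rw [hcStardef]; simp only; rw [if_neg hw', if_pos hw]
  have eI : ∀ w, w ∈ I → w ∉ Bset → cStar w = fr (φ w) := by
    intro w hw hw'
    have h1 : w ∉ R := fun hc => hw' (hRsubB hc)
    rw [hcStardef]; simp only; rw [if_neg h1, if_neg hw', if_pos hw]
  have eU : ∀ w, w ∉ I → w ∈ Uset → cStar w = fr (φ (rep w)) := by
    intro w hw hwU
    have h1 : w ∉ R := fun hc => hw (hBsubI (hRsubB hc))
    have h2 : w ∉ Bset := fun hc => hw (hBsubI hc)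
    rw [hcStardef]; simp only; rw [if_neg h1, if_neg h2, if_neg hw, if_pos hwU]
  have eP : ∀ w, w ∉ I → w ∉ Uset → cStar w = old (c₀ w) := by
    intro w hw hwU
    have h1 : w ∉ R := fun hc => hw (hBsubI (hRsubB hc))
    have h2 : w ∉ Bset := fun hc => hw (hBsubI hc)
    rw [hcStardef]; simp only; rw [if_neg h1, if_neg h2, if_neg hw, if_neg hwU]
  -- the key collision lemma
  have KEY : ∀ w₁ w₂ : V, w₁ ≠ w₂ → cStar w₁ = cStar w₂ →
      (w₁ ∈ Bset ∧ w₂ ∈ Bset) ∨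
      (w₁ ∉ I ∧ w₁ ∉ Uset ∧ w₂ ∉ I ∧ w₂ ∉ Uset ∧ c₀ w₁ = c₀ w₂) := by
    intro w₁ w₂ hne heq
    by_cases h1I : w₁ ∈ I
    · by_cases h1B : w₁ ∈ Bset
      · by_cases h1R : w₁ ∈ R
        · rw [eR _ h1R] at heq
          by_cases h2I : w₂ ∈ I
          · by_cases h2B : w₂ ∈ Bset
            · exact Or.inl ⟨h1B, h2B⟩
            · rw [eI _ h2I h2B] at heq
              exact absurd (hFinj _ _ heq).symm (hφff (hRZ _ h1R) _ (hIBD _ h2I h2B))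
          · by_cases h2U : w₂ ∈ Uset
            · rw [eU _ h2I h2U] at heq
              exact absurd (hFinj _ _ heq).symm (hφff (hRZ _ h1R) _ (hUD _ h2U))
            · rw [eP _ h2I h2U] at heq
              exact absurd heq.symm (hOF _ _)
        · rw [eB _ h1B h1R] at heq
          by_cases h2I : w₂ ∈ I
          · by_cases h2B : w₂ ∈ Bset
            · exact Or.inl ⟨h1B, h2B⟩
            · rw [eI _ h2I h2B] at heq; exact absurd heq (hOF _ _)
          · by_cases h2U : w₂ ∈ Uset
            · rw [eU _ h2I h2U] at heq; exact absurd heq (hOF _ _)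
            · rw [eP _ h2I h2U] at heq
              exact absurd (hOinj _ _ heq).symm (hplainK _ h2I)
      · rw [eI _ h1I h1B] at heq
        by_cases h2I : w₂ ∈ I
        · by_cases h2B : w₂ ∈ Bset
          · by_cases h2R : w₂ ∈ R
            · rw [eR _ h2R] at heq
              exact absurd (hFinj _ _ heq) (hφff (hRZ _ h2R) _ (hIBD _ h1I h1B))
            · rw [eB _ h2B h2R] at heq; exact absurd heq.symm (hOF _ _)
          · rw [eI _ h2I h2B] at heq
            exact absurd (hφinj _ (hIBD _ h1I h1B) _ (hIBD _ h2I h2B) (hFinj _ _ heq)) hne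
        · by_cases h2U : w₂ ∈ Uset
          · rw [eU _ h2I h2U] at heq
            have hww := hφinj _ (hIBD _ h1I h1B) _ (hUD _ h2U) (hFinj _ _ heq)
            exact absurd (show w₁ ∈ Bset by rw [hww]; exact hrepB _ h2U) h1B
          · rw [eP _ h2I h2U] at heq; exact absurd heq.symm (hOF _ _)
    · by_cases h1U : w₁ ∈ Uset
      · rw [eU _ h1I h1U] at heq
        by_cases h2I : w₂ ∈ I
        · by_cases h2B : w₂ ∈ Bset
          · by_cases h2R : w₂ ∈ R
            · rw [eR _ h2R] at heq
              exact absurd (hFinj _ _ heq) (hφff (hRZ _ h2R) _ (hUD _ h1U))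
            · rw [eB _ h2B h2R] at heq; exact absurd heq.symm (hOF _ _)
          · rw [eI _ h2I h2B] at heq
            have hww := hφinj _ (hUD _ h1U) _ (hIBD _ h2I h2B) (hFinj _ _ heq)
            exact absurd (show w₂ ∈ Bset by rw [← hww]; exact hrepB _ h1U) h2B
        · by_cases h2U : w₂ ∈ Uset
          · rw [eU _ h2I h2U] at heq
            have hww := hφinj _ (hUD _ h1U) _ (hUD _ h2U) (hFinj _ _ heq)
            exact absurd (hrepinj _ h1U _ h2U hww) hne
          · rw [eP _ h2I h2U] at heq; exact absurd heq.symm (hOF _ _)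
      · rw [eP _ h1I h1U] at heq
        by_cases h2I : w₂ ∈ I
        · by_cases h2B : w₂ ∈ Bset
          · by_cases h2R : w₂ ∈ R
            · rw [eR _ h2R] at heq; exact absurd heq (hOF _ _)
            · rw [eB _ h2B h2R] at heq
              exact absurd (hOinj _ _ heq) (hplainK _ h1I)
          · rw [eI _ h2I h2B] at heq; exact absurd heq (hOF _ _)
        · by_cases h2U : w₂ ∈ Uset
          · rw [eU _ h2I h2U] at heq; exact absurd heq (hOF _ _)
          · rw [eP _ h2I h2U] at heq
            exact Or.inr ⟨h1I, h1U, h2I, h2U, hOinj _ _ heq⟩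
  -- properness
  have hProp : ProperColoring G cStar := by
    intro u w hadj heq
    rcases KEY u w hadj.ne heq with ⟨hb1, hb2⟩ | ⟨-, -, -, -, hc⟩
    · exact hIind u (hBsubI hb1) w (hBsubI hb2) hadj
    · exact hc₀P hadj hc
  -- dynamic condition
  have hDyn : ∀ v, 2 ≤ G.degree v → ∃ u w, G.Adj v u ∧ G.Adj v w ∧ cStar u ≠ cStar w := by
    intro v hdeg
    have hdegcard : 2 ≤ (G.neighborFinset v).card := hdeg
    by_cases hvI : v ∈ I
    · by_cases hvB : v ∈ Bset
      · obtain ⟨u₂, hu₂, hu₂ne⟩ := Finset.exists_mem_ne (s := G.neighborFinset v) (by omega) (uF v)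
        have hu₁ : uF v ∈ G.neighborFinset v := hUFmem v hvB
        refine ⟨uF v, u₂, by rwa [mem_neighborFinset] at hu₁,
          by rwa [mem_neighborFinset] at hu₂, ?_⟩
        intro heq
        have huU : uF v ∈ Uset := by rw [hUdef]; exact mem_image_of_mem _ hvB
        rcases KEY (uF v) u₂ hu₂ne.symm heq with ⟨hB1, -⟩ | ⟨-, hU1, -, -, -⟩
        · exact hUI _ huU (hBsubI hB1)
        · exact hU1 huU
      · have hnotmono : ¬ (∀ u ∈ G.neighborFinset v, ∀ w ∈ G.neighborFinset v, c₀ u = c₀ w) := by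
          intro hm
          exact hvB (by rw [hBsetdef, mem_filter]; exact ⟨hvI, hdeg, hm⟩)
        push_neg at hnotmono
        obtain ⟨w₁, hw₁, w₂, hw₂, hcne⟩ := hnotmono
        refine ⟨w₁, w₂, by rwa [mem_neighborFinset] at hw₁,
          by rwa [mem_neighborFinset] at hw₂, ?_⟩
        intro heq
        rcases KEY w₁ w₂ (fun e => hcne (by rw [e])) heq with ⟨hB1, -⟩ | ⟨-, -, -, -, hc⟩
        · exact hIind v hvI w₁ (hBsubI hB1) (by rwa [mem_neighborFinset] at hw₁)
        · exact hcne hc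
    · by_cases hvZ : v ∈ Zset
      · obtain ⟨b, hbN, hbc⟩ := hrainbow v hvZ (μ (c₀ v)) (hμne _)
        obtain ⟨b', hb'N, hb'c⟩ := hrainbow v hvZ kTop (Ne.symm (hplainK v hvI))
        have hbB : b ∈ Bset := hZsub v hvZ hbN
        have hbR : b ∈ R := by
          rw [hRdef, mem_filter]
          refine ⟨hbB, ?_, ⟨v, hvZ, hbN⟩⟩
          have hvb : v ∈ G.neighborFinset b := by
            rw [mem_neighborFinset] at hbN ⊢; exact hbN.symm
          have hnb : (G.neighborFinset b).Nonempty := ⟨v, hvb⟩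
          have haFb : aF b = c₀ v := by
            rw [haFdef]; simp only
            exact hBmono b hbB _ (hnF b hnb) _ hvb
          rw [haFb]; exact hbc
        have hb'B : b' ∈ Bset := hZsub v hvZ hb'N
        have hb'R : b' ∉ R := by
          rw [hRdef, mem_filter]
          rintro ⟨-, he, -⟩
          exact hμK (aF b') (by rw [← he]; exact hb'c)
        refine ⟨b, b', by rwa [mem_neighborFinset] at hbN,
          by rwa [mem_neighborFinset] at hb'N, ?_⟩
        rw [eR b hbR, eB b' hb'B hb'R]
        exact fun e => hOF _ _ e.symm
      · have hex : ∃ p ∈ G.neighborFinset v, p ∉ Bset := by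
          by_contra hfa
          push_neg at hfa
          exact hvZ (by rw [hZdef, mem_filter]; exact ⟨mem_univ _, hvI, hdeg, hfa⟩)
        obtain ⟨p, hpN, hpB⟩ := hex
        by_cases hpP : p ∉ I ∧ p ∉ Uset
        · obtain ⟨y, hyI, hyadj⟩ := hIdom v hvI
          refine ⟨y, p, hyadj, by rwa [mem_neighborFinset] at hpN, ?_⟩
          intro heq
          have hyp : y ≠ p := fun e => hpP.1 (e ▸ hyI)
          rcases KEY y p hyp heq with ⟨-, hB2⟩ | ⟨hI1, -, -, -, -⟩
          · exact hpB hB2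
          · exact hI1 hyI
        · obtain ⟨q, hq, hqne⟩ := Finset.exists_mem_ne (s := G.neighborFinset v) (by omega) p
          refine ⟨p, q, by rwa [mem_neighborFinset] at hpN,
            by rwa [mem_neighborFinset] at hq, ?_⟩
          intro heq
          rcases KEY p q hqne.symm heq with ⟨hB1, -⟩ | ⟨hI1, hU1, -, -, -⟩
          · exact hpB hB1
          · exact hpP ⟨hI1, hU1⟩
  -- conclude
  have hmem : (k + A) ∈ {n | ∃ c : V → Fin n, DynColoring G c} := ⟨cStar, hProp, hDyn⟩
  exact Nat.sInf_le hmem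
end

section
/- If G is a k-regular graph with diameter at most 2 and χ(G) ≥ 4, then χ₂(G) − χ(G) ≤ 1. -/
open SimpleGraph Finset

set_option linter.unusedSectionVars false

section MyAux
variable {V : Type*} [Fintype V] {G : SimpleGraph V} [DecidableRel G.Adj]

private lemma myTwoNbrs {k : ℕ} (hreg : G.IsRegularOfDegree k) (hk : 2 ≤ k) (v : V) :
    ∃ a b, G.Adj v a ∧ G.Adj v b ∧ a ≠ b := by
  have h1 : 1 < (G.neighborFinset v).card := by
    rw [card_neighborFinset_eq_degree, hreg v]; omega
  obtain ⟨a, ha, b, hb, hab⟩ := Finset.one_lt_card.mp h1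
  exact ⟨a, b, (G.mem_neighborFinset v a).mp ha, (G.mem_neighborFinset v b).mp hb, hab⟩

private lemma targetsEq {n : ℕ}
    (hdiam : ∀ u v : V, u ≠ v → G.Adj u v ∨ ∃ w, G.Adj u w ∧ G.Adj w v)
    {c : V → Fin n} {u v : V} {ju jv : Fin n}
    (hu : ∀ x, G.Adj u x → c x = ju) (hv : ∀ x, G.Adj v x → c x = jv)
    (hnadj : ¬ G.Adj u v) (hx : ∃ x, G.Adj u x) : ju = jv := by
  rcases eq_or_ne u v with rfl | hne
  · obtain ⟨x, hx⟩ := hx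
    rw [← hu x hx, hv x hx]
  · rcases hdiam u v hne with h | ⟨z, h1, h2⟩
    · exact absurd h hnadj
    · rw [← hu z h1, hv z h2.symm]

/-- Classification of bad vertices in the presence of an adjacent bad pair. -/
private lemma classify {k n : ℕ}
    (hdiam : ∀ u v : V, u ≠ v → G.Adj u v ∨ ∃ w, G.Adj u w ∧ G.Adj w v)
    (hreg : G.IsRegularOfDegree k) (hk : 2 ≤ k) {c : V → Fin n}
    (hc : ProperColoring G c) {v0 u0 : V}
    (hbv0 : ∀ a b, G.Adj v0 a → G.Adj v0 b → c a = c b)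
    (hbu0 : ∀ a b, G.Adj u0 a → G.Adj u0 b → c a = c b)
    (hadj : G.Adj v0 u0) :
    ∀ v, (∀ a b, G.Adj v a → G.Adj v b → c a = c b) →
      (G.Adj u0 v ∧ (∀ x, G.Adj v x → c x = c u0) ∧ c v = c v0) ∨
      (G.Adj v0 v ∧ (∀ x, G.Adj v x → c x = c v0) ∧ c v = c u0) := by
  intro v hv
  have hv0mono : ∀ x, G.Adj v0 x → c x = c u0 := fun x hx => hbv0 x u0 hx hadj
  have hu0mono : ∀ x, G.Adj u0 x → c x = c v0 := fun x hx => hbu0 x v0 hx hadj.symm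
  have hij : c v0 ≠ c u0 := hc hadj
  by_cases h1 : G.Adj v0 v
  · exact Or.inr ⟨h1, fun x hx => hv x v0 hx h1.symm, hv0mono v h1⟩
  · by_cases h2 : G.Adj u0 v
    · exact Or.inl ⟨h2, fun x hx => hv x u0 hx h2.symm, hu0mono v h2⟩
    · exfalso
      obtain ⟨x0, hx0⟩ : ∃ x, G.Adj v x := by
        obtain ⟨a, b, ha, _, _⟩ := myTwoNbrs hreg hk v
        exact ⟨a, ha⟩
      have hmono : ∀ x, G.Adj v x → c x = c x0 := fun x hx => hv x x0 hx hx0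
      have hnadj1 : ¬ G.Adj v v0 := fun hh => h1 hh.symm
      have hnadj2 : ¬ G.Adj v u0 := fun hh => h2 hh.symm
      have e1 : c x0 = c u0 := targetsEq hdiam hmono hv0mono hnadj1 ⟨x0, hx0⟩
      have e2 : c x0 = c v0 := targetsEq hdiam hmono hu0mono hnadj2 ⟨x0, hx0⟩
      exact hij (e2.symm.trans e1)


private lemma commonTwo {k n : ℕ}
    (hdiam : ∀ u v : V, u ≠ v → G.Adj u v ∨ ∃ w, G.Adj u w ∧ G.Adj w v)
    (hreg : G.IsRegularOfDegree k) (hk : 2 ≤ k) {c : V → Fin n}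
    (hc : ProperColoring G c) {v v0 : V} {j : Fin n}
    (hv : ∀ x, G.Adj v x → c x = j) (hv0 : ∀ x, G.Adj v0 x → c x = j)
    (hnadj : ¬ G.Adj v v0) :
    ∃ z1 z2, z1 ≠ z2 ∧ G.Adj v z1 ∧ G.Adj v0 z1 ∧ G.Adj v z2 ∧ G.Adj v0 z2 := by
  rcases eq_or_ne v v0 with rfl | hne
  · obtain ⟨a, b, ha, hb, hab⟩ := myTwoNbrs hreg hk v
    exact ⟨a, b, hab, ha, ha, hb, hb⟩
  · rcases hdiam v v0 hne with h | ⟨z, h1, h2⟩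
    · exact absurd h hnadj
    · have hz0 : G.Adj v0 z := h2.symm
      obtain ⟨a, b, ha, hb, hab⟩ := myTwoNbrs hreg hk v0
      have hw : ∃ w', G.Adj v0 w' ∧ w' ≠ z := by
        rcases eq_or_ne a z with rfl | hz
        · exact ⟨b, hb, fun hh => hab hh.symm⟩
        · exact ⟨a, ha, hz⟩
      obtain ⟨w', hw', hwz⟩ := hw
      by_cases hvw : G.Adj v w'
      · exact ⟨z, w', fun hh => hwz hh.symm, h1, hz0, hvw, hw'⟩
      · exfalso
        have hvne : v ≠ w' := by
          rintro rfl
          exact hnadj hw'.symm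
        rcases hdiam v w' hvne with h | ⟨z', hz1, hz2⟩
        · exact hvw h
        · exact hc hz2 ((hv z' hz1).trans (hv0 w' hw').symm)

/-- Existence of a third color. -/
private lemma thirdColor {n : ℕ} (hn : 4 ≤ n) (i j : Fin n) :
    ∃ t : Fin n, t ≠ i ∧ t ≠ j := by
  by_contra hcon
  push_neg at hcon
  have hsub : (Finset.univ : Finset (Fin n)) ⊆ {i, j} := by
    intro t _
    rcases eq_or_ne t i with rfl | hne
    · simp
    · simp [hcon t hne]
  have h1 := Finset.card_le_card hsub
  have h2 : ({i, j} : Finset (Fin n)).card ≤ 2 :=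
    (Finset.card_insert_le _ _).trans (by simp)
  simp only [Finset.card_univ, Fintype.card_fin] at h1
  omega

set_option maxHeartbeats 1000000 in
/-- Case B1: adjacent bad pair v0 u0, plus another bad vertex v1 adjacent to u0. -/
private lemma caseB1 {k n : ℕ}
    (hdiam : ∀ u v : V, u ≠ v → G.Adj u v ∨ ∃ w, G.Adj u w ∧ G.Adj w v)
    (hreg : G.IsRegularOfDegree k) (hk : 2 ≤ k) (hn : 4 ≤ n) {c : V → Fin n}
    (hc : ProperColoring G c) {v0 u0 v1 : V}
    (hbv0 : ∀ a b, G.Adj v0 a → G.Adj v0 b → c a = c b)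
    (hbu0 : ∀ a b, G.Adj u0 a → G.Adj u0 b → c a = c b)
    (hadj : G.Adj v0 u0)
    (hbv1 : ∀ a b, G.Adj v1 a → G.Adj v1 b → c a = c b)
    (hv1u0 : G.Adj u0 v1) (hne10 : v1 ≠ v0) :
    ∃ c' : V → Fin (n+1), ProperColoring G c' ∧
      ∀ v, 2 ≤ G.degree v → ∃ u w, G.Adj v u ∧ G.Adj v w ∧ c' u ≠ c' w := by
  classical
  have hv0mono : ∀ x, G.Adj v0 x → c x = c u0 := fun x hx => hbv0 x u0 hx hadj
  have hu0mono : ∀ x, G.Adj u0 x → c x = c v0 := fun x hx => hbu0 x v0 hx hadj.symm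
  have hij : c v0 ≠ c u0 := hc hadj
  have hclass := classify hdiam hreg hk hc hbv0 hbu0 hadj
  -- v1 facts
  have hv1i : c v1 = c v0 := hu0mono v1 hv1u0
  have hv1mono : ∀ x, G.Adj v1 x → c x = c u0 := by
    rcases hclass v1 hbv1 with ⟨_, hm, _⟩ | ⟨h1, _, h3⟩
    · exact hm
    · exact absurd (hv1i.symm.trans h3) hij
  obtain ⟨t, hti, htj⟩ := thirdColor hn (c v0) (c u0)
  -- the recolored set (gets new color `last`), besides v0 which gets t
  set P : V → Prop := fun y => (c y = c u0 ∧ ¬ G.Adj v0 y) ∨ y = u0 with hP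
  have hPj : ∀ y, P y → c y = c u0 := by
    rintro y (⟨h, _⟩ | rfl)
    · exact h
    · rfl
  have hPv0 : ¬ P v0 := by
    rintro (⟨h, _⟩ | h)
    · exact hij h
    · exact hadj.ne h
  have hPu0 : P u0 := Or.inr rfl
  refine ⟨fun y => if y = v0 then t.castSucc else
    if P y then Fin.last n else (c y).castSucc, ?_, ?_⟩
  · -- properness
    intro a b hab
    dsimp only
    by_cases ha0 : a = v0 <;> by_cases hb0 : b = v0
    · subst ha0; subst hb0; exact absurd hab (G.loopless.irrefl _)
    · subst ha0
      rw [if_pos rfl, if_neg hb0]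
      by_cases hBb : P b
      · rw [if_pos hBb]
        exact (Fin.castSucc_lt_last t).ne
      · rw [if_neg hBb]
        intro hh
        exact htj (by rw [Fin.castSucc_inj.mp hh, hv0mono b hab])
    · subst hb0
      rw [if_neg ha0, if_pos rfl]
      by_cases hBa : P a
      · rw [if_pos hBa]
        exact (Fin.castSucc_lt_last t).ne'
      · rw [if_neg hBa]
        intro hh
        exact htj (by rw [← Fin.castSucc_inj.mp hh, hv0mono a hab.symm])
    · rw [if_neg ha0, if_neg hb0]
      by_cases hBa : P a <;> by_cases hBb : P b
      · exact absurd ((hPj a hBa).trans (hPj b hBb).symm) (hc hab)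
      · rw [if_pos hBa, if_neg hBb]; exact (Fin.castSucc_lt_last _).ne'
      · rw [if_neg hBa, if_pos hBb]; exact (Fin.castSucc_lt_last _).ne
      · rw [if_neg hBa, if_neg hBb]
        exact fun hh => hc hab (Fin.castSucc_inj.mp hh)
  · -- dynamic condition
    intro v _
    by_cases hbadv : ∀ a b, G.Adj v a → G.Adj v b → c a = c b
    · rcases hclass v hbadv with ⟨hvu0, hmono, hvi⟩ | ⟨hvv0, hmono, hvj⟩
      · -- v ∈ B_i' : all neighbors colored c u0, u0 is a neighbor
        have hvadj_u0 : G.Adj v u0 := hvu0.symm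
        have hz : ∃ z, G.Adj v z ∧ G.Adj v0 z ∧ z ≠ u0 := by
          by_cases hvv0 : v = v0
          · subst hvv0
            obtain ⟨a, b, ha, hb, hab⟩ := myTwoNbrs hreg hk v
            rcases eq_or_ne a u0 with rfl | hau
            · exact ⟨b, hb, hb, fun hh => hab hh.symm⟩
            · exact ⟨a, ha, ha, hau⟩
          · have hnadj : ¬ G.Adj v v0 := fun hh => hc hh hvi
            obtain ⟨z1, z2, hz12, h1, h2, h3, h4⟩ :=
              commonTwo hdiam hreg hk hc hmono hv0mono hnadj
            rcases eq_or_ne z1 u0 with rfl | hz1u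
            · exact ⟨z2, h3, h4, fun hh => hz12 hh.symm⟩
            · exact ⟨z1, h1, h2, hz1u⟩
        obtain ⟨z, hvz, hv0z, hzu0⟩ := hz
        refine ⟨u0, z, hvadj_u0, hvz, ?_⟩
        dsimp only
        have hu0v0 : u0 ≠ v0 := hadj.ne'
        have hzv0 : z ≠ v0 := hv0z.ne'
        have hPz : ¬ P z := by
          rintro (⟨_, hno⟩ | rfl)
          · exact hno hv0z
          · exact hzu0 rfl
        rw [if_neg hu0v0, if_pos hPu0, if_neg hzv0, if_neg hPz]
        exact (Fin.castSucc_lt_last _).ne'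
      · -- v ∈ B_j' : all neighbors colored c v0, v0 is a neighbor
        have hvadj_v0 : G.Adj v v0 := hvv0.symm
        obtain ⟨a, b, ha, hb, hab⟩ := myTwoNbrs hreg hk v
        have hx : ∃ x, G.Adj v x ∧ x ≠ v0 := by
          rcases eq_or_ne a v0 with rfl | hav
          · exact ⟨b, hb, fun hh => hab hh.symm⟩
          · exact ⟨a, ha, hav⟩
        obtain ⟨x, hvx, hxv0⟩ := hx
        have hcx : c x = c v0 := hmono x hvx
        have hPx : ¬ P x := by
          rintro (⟨h, _⟩ | rfl)
          · exact hij (hcx.symm.trans h)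
          · exact hij hcx.symm
        refine ⟨v0, x, hvadj_v0, hvx, ?_⟩
        dsimp only
        rw [if_pos rfl, if_neg hxv0, if_neg hPx]
        intro hh
        exact hti (by rw [Fin.castSucc_inj.mp hh, hcx])
    · -- good vertex
      push_neg at hbadv
      obtain ⟨a, b, hva, hvb, hcab⟩ := hbadv
      by_cases hvS : ∃ x, G.Adj v x ∧ P x
      · obtain ⟨x, hvx, hPx⟩ := hvS
        have hxv0 : x ≠ v0 := fun hh => hPv0 (hh ▸ hPx)
        have hy : ∃ y, G.Adj v y ∧ ¬ P y := by
          by_contra hco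
          push_neg at hco
          exact hcab ((hPj a (hco a hva)).trans (hPj b (hco b hvb)).symm)
        obtain ⟨y, hvy, hPy⟩ := hy
        refine ⟨x, y, hvx, hvy, ?_⟩
        dsimp only
        rw [if_neg hxv0, if_pos hPx]
        by_cases hyv0 : y = v0
        · rw [if_pos hyv0]
          exact (Fin.castSucc_lt_last _).ne'
        · rw [if_neg hyv0, if_neg hPy]
          exact (Fin.castSucc_lt_last _).ne'
      · push_neg at hvS
        by_cases hvv0 : G.Adj v v0
        · by_cases hex : ∃ y, G.Adj v y ∧ y ≠ v0 ∧ c y ≠ t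
          · obtain ⟨y, hvy, hyv0, hyt⟩ := hex
            refine ⟨v0, y, hvv0, hvy, ?_⟩
            dsimp only
            rw [if_pos rfl, if_neg hyv0, if_neg (hvS y hvy)]
            exact fun hh => hyt (Fin.castSucc_inj.mp hh).symm
          · exfalso
            push_neg at hex
            have hcv : c v = c u0 := hv0mono v hvv0.symm
            have hvne1 : v ≠ v1 := fun hh => hij (hv1i.symm.trans (hh ▸ hcv))
            have hnadj1 : ¬ G.Adj v v1 := by
              intro hh
              exact hti ((hex v1 hh hne10).symm.trans hv1i)
            rcases hdiam v v1 hvne1 with h | ⟨z, hz1, hz2⟩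
            · exact hnadj1 h
            · have hcz : c z = c u0 := hv1mono z hz2.symm
              rcases eq_or_ne z v0 with rfl | hzv0
              · exact hij ((hv0mono v1 hz2).symm.trans hv1i).symm
              · exact htj ((hex z hz1 hzv0).symm.trans hcz)
        · refine ⟨a, b, hva, hvb, ?_⟩
          dsimp only
          have hav0 : a ≠ v0 := fun hh => hvv0 (hh ▸ hva)
          have hbv0' : b ≠ v0 := fun hh => hvv0 (hh ▸ hvb)
          rw [if_neg hav0, if_neg (hvS a hva), if_neg hbv0', if_neg (hvS b hvb)]
          exact fun hh => hcab (Fin.castSucc_inj.mp hh)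


set_option maxHeartbeats 1000000 in
/-- Case A: there is a bad vertex, but no two bad vertices are adjacent. -/
private lemma caseA {k n : ℕ}
    (hdiam : ∀ u v : V, u ≠ v → G.Adj u v ∨ ∃ w, G.Adj u w ∧ G.Adj w v)
    (hreg : G.IsRegularOfDegree k) (hk : 2 ≤ k) {c : V → Fin n}
    (hc : ProperColoring G c) {vb : V}
    (hbvb : ∀ a b, G.Adj vb a → G.Adj vb b → c a = c b)
    (hnopair : ∀ u v, (∀ a b, G.Adj u a → G.Adj u b → c a = c b) →
      (∀ a b, G.Adj v a → G.Adj v b → c a = c b) → ¬ G.Adj u v) :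
    ∃ c' : V → Fin (n+1), ProperColoring G c' ∧
      ∀ v, 2 ≤ G.degree v → ∃ u w, G.Adj v u ∧ G.Adj v w ∧ c' u ≠ c' w := by
  classical
  obtain ⟨x0, hx0⟩ : ∃ x, G.Adj vb x := by
    obtain ⟨a, b, ha, _, _⟩ := myTwoNbrs hreg hk vb
    exact ⟨a, ha⟩
  set j : Fin n := c x0 with hjdef
  have hvbmono : ∀ x, G.Adj vb x → c x = j := fun x hx => hbvb x x0 hx hx0
  -- all bad vertices have monochromatic neighborhoods of the same color j
  have huniv : ∀ v, (∀ a b, G.Adj v a → G.Adj v b → c a = c b) →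
      ∀ x, G.Adj v x → c x = j := by
    intro v hv x hx
    have hnadj : ¬ G.Adj v vb := by
      by_cases hvv : v = vb
      · subst hvv; exact G.loopless.irrefl v
      · exact hnopair v vb hv hbvb
    have hmono : ∀ y, G.Adj v y → c y = c x := fun y hy => hv y x hy hx
    exact (targetsEq hdiam hmono hvbmono hnadj ⟨x, hx⟩)
  set P : V → Prop := fun y => (c y = j ∧ ¬ G.Adj vb y) ∨ y = x0 with hP
  have hPj : ∀ y, P y → c y = j := by
    rintro y (⟨h, _⟩ | rfl)
    · exact h
    · rfl
  refine ⟨fun y => if P y then Fin.last n else (c y).castSucc, ?_, ?_⟩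
  · intro a b hab
    dsimp only
    by_cases hA : P a <;> by_cases hB : P b
    · exact absurd ((hPj a hA).trans (hPj b hB).symm) (hc hab)
    · rw [if_pos hA, if_neg hB]; exact (Fin.castSucc_lt_last _).ne'
    · rw [if_neg hA, if_pos hB]; exact (Fin.castSucc_lt_last _).ne
    · rw [if_neg hA, if_neg hB]
      exact fun hh => hc hab (Fin.castSucc_inj.mp hh)
  · intro v _
    by_cases hbadv : ∀ a b, G.Adj v a → G.Adj v b → c a = c b
    · -- bad vertex
      have hmono := huniv v hbadv
      have hnadj : ¬ G.Adj v vb := by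
        by_cases hvv : v = vb
        · subst hvv; exact G.loopless.irrefl v
        · exact hnopair v vb hbadv hbvb
      obtain ⟨z1, z2, hz12, h1, h2, h3, h4⟩ :=
        commonTwo hdiam hreg hk hc hmono hvbmono hnadj
      -- a neighbor of v outside S
      have hzout : ∃ z, G.Adj v z ∧ G.Adj vb z ∧ z ≠ x0 := by
        rcases eq_or_ne z1 x0 with rfl | hz1x
        · exact ⟨z2, h3, h4, fun hh => hz12 hh.symm⟩
        · exact ⟨z1, h1, h2, hz1x⟩
      obtain ⟨z, hvz, hvbz, hzx0⟩ := hzout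
      -- a neighbor of v inside S
      have hin : ∃ x, G.Adj v x ∧ P x := by
        by_contra hco
        push_neg at hco
        have hsub : G.neighborFinset v ⊆ (G.neighborFinset vb).erase x0 := by
          intro y hy
          rw [SimpleGraph.mem_neighborFinset] at hy
          have hyS := hco y hy
          have hy1 : y ≠ x0 := fun hh => hyS (Or.inr hh)
          have hy2 : G.Adj vb y := by
            by_contra hno
            exact hyS (Or.inl ⟨hmono y hy, hno⟩)
          exact Finset.mem_erase.mpr ⟨hy1, (G.mem_neighborFinset vb y).mpr hy2⟩
        have h1 := Finset.card_le_card hsub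
        rw [Finset.card_erase_of_mem ((G.mem_neighborFinset vb x0).mpr hx0)] at h1
        rw [card_neighborFinset_eq_degree, card_neighborFinset_eq_degree,
          hreg v, hreg vb] at h1
        omega
      obtain ⟨x, hvx, hPx⟩ := hin
      refine ⟨x, z, hvx, hvz, ?_⟩
      dsimp only
      have hPz : ¬ P z := by
        rintro (⟨_, hno⟩ | rfl)
        · exact hno hvbz
        · exact hzx0 rfl
      rw [if_pos hPx, if_neg hPz]
      exact (Fin.castSucc_lt_last _).ne'
    · push_neg at hbadv
      obtain ⟨a, b, hva, hvb', hcab⟩ := hbadv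
      refine ⟨a, b, hva, hvb', ?_⟩
      dsimp only
      by_cases hA : P a <;> by_cases hB : P b
      · exact absurd ((hPj a hA).trans (hPj b hB).symm) hcab
      · rw [if_pos hA, if_neg hB]; exact (Fin.castSucc_lt_last _).ne'
      · rw [if_neg hA, if_pos hB]; exact (Fin.castSucc_lt_last _).ne
      · rw [if_neg hA, if_neg hB]
        exact fun hh => hcab (Fin.castSucc_inj.mp hh)


set_option maxHeartbeats 1000000 in
/-- If every "candidate pair" is adjacent, G is 2-colorable (giving Colorable 3). -/
private lemma colorAlpha {k n : ℕ}
    (hdiam : ∀ u v : V, u ≠ v → G.Adj u v ∨ ∃ w, G.Adj u w ∧ G.Adj w v)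
    (hreg : G.IsRegularOfDegree k) (hk : 2 ≤ k) {c : V → Fin n}
    (hc : ProperColoring G c) {v0 u0 : V}
    (hbv0 : ∀ a b, G.Adj v0 a → G.Adj v0 b → c a = c b)
    (hbu0 : ∀ a b, G.Adj u0 a → G.Adj u0 b → c a = c b)
    (hadj : G.Adj v0 u0)
    (hall : ∀ w w', G.Adj v0 w → w ≠ u0 → G.Adj u0 w' → w' ≠ v0 → G.Adj w w') :
    G.Colorable 3 := by
  classical
  have hv0mono : ∀ x, G.Adj v0 x → c x = c u0 := fun x hx => hbv0 x u0 hx hadj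
  have hu0mono : ∀ x, G.Adj u0 x → c x = c v0 := fun x hx => hbu0 x v0 hx hadj.symm
  have hcover : ∀ x : V,
      (x = v0 ∨ (G.Adj u0 x ∧ x ≠ v0)) ∨ (x = u0 ∨ (G.Adj v0 x ∧ x ≠ u0)) := by
    intro x
    by_cases h1 : x = v0
    · exact Or.inl (Or.inl h1)
    by_cases h2 : x = u0
    · exact Or.inr (Or.inl h2)
    by_cases h3 : G.Adj u0 x
    · exact Or.inl (Or.inr ⟨h3, h1⟩)
    by_cases h4 : G.Adj v0 x
    · exact Or.inr (Or.inr ⟨h4, h2⟩)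
    exfalso
    rcases hdiam v0 x (Ne.symm h1) with h | ⟨z, hz1, hz2⟩
    · exact h4 h
    · have hzu : z ≠ u0 := by
        rintro rfl
        exact h3 hz2
      have hTsub : insert v0 ((G.neighborFinset u0).erase v0) ⊆ G.neighborFinset z := by
        intro y hy
        rw [SimpleGraph.mem_neighborFinset]
        rcases Finset.mem_insert.mp hy with rfl | hy'
        · exact hz1.symm
        · obtain ⟨hyne, hyadj⟩ := Finset.mem_erase.mp hy'
          rw [SimpleGraph.mem_neighborFinset] at hyadj
          exact hall z y hz1 hzu hyadj hyne
      have hcard : (G.neighborFinset z).card ≤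
          (insert v0 ((G.neighborFinset u0).erase v0)).card := by
        rw [Finset.card_insert_of_notMem (by simp), Finset.card_erase_of_mem
            ((G.mem_neighborFinset u0 v0).mpr hadj.symm),
          card_neighborFinset_eq_degree, card_neighborFinset_eq_degree, hreg z, hreg u0]
        omega
      have hEq := Finset.eq_of_subset_of_card_le hTsub hcard
      have hx : x ∈ G.neighborFinset z := (G.mem_neighborFinset z x).mpr hz2
      rw [← hEq] at hx
      rcases Finset.mem_insert.mp hx with rfl | hx'
      · exact h1 rfl
      · exact h3 ((G.mem_neighborFinset u0 x).mp (Finset.mem_erase.mp hx').2)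
  refine ⟨SimpleGraph.Coloring.mk
    (fun x => if x = v0 ∨ (G.Adj u0 x ∧ x ≠ v0) then (0 : Fin 3) else 1) ?_⟩
  intro a b hab
  by_cases hA : a = v0 ∨ (G.Adj u0 a ∧ a ≠ v0) <;>
    by_cases hB : b = v0 ∨ (G.Adj u0 b ∧ b ≠ v0)
  · exfalso
    have ha : c a = c v0 := by
      rcases hA with rfl | ⟨hh, _⟩
      · rfl
      · exact hu0mono a hh
    have hb : c b = c v0 := by
      rcases hB with rfl | ⟨hh, _⟩
      · rfl
      · exact hu0mono b hh
    exact hc hab (ha.trans hb.symm)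
  · rw [if_pos hA, if_neg hB]
    decide
  · rw [if_neg hA, if_pos hB]
    decide
  · exfalso
    have ha := (hcover a).resolve_left hA
    have hb := (hcover b).resolve_left hB
    have ha' : c a = c u0 := by
      rcases ha with rfl | ⟨hh, _⟩
      · rfl
      · exact hv0mono a hh
    have hb' : c b = c u0 := by
      rcases hb with rfl | ⟨hh, _⟩
      · rfl
      · exact hv0mono b hh
    exact hc hab (ha'.trans hb'.symm)


set_option maxHeartbeats 1000000 in
/-- The 5-cycle case: gives a 3-coloring. -/
private lemma colorBeta {k n : ℕ}
    (hdiam : ∀ u v : V, u ≠ v → G.Adj u v ∨ ∃ w, G.Adj u w ∧ G.Adj w v)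
    (hreg : G.IsRegularOfDegree k) {c : V → Fin n}
    (hc : ProperColoring G c) {v0 u0 w w' x : V}
    (hbv0 : ∀ a b, G.Adj v0 a → G.Adj v0 b → c a = c b)
    (hbu0 : ∀ a b, G.Adj u0 a → G.Adj u0 b → c a = c b)
    (hadj : G.Adj v0 u0)
    (hw : G.Adj v0 w) (hwu0 : w ≠ u0) (hw' : G.Adj u0 w') (hw'v0 : w' ≠ v0)
    (hww' : ¬ G.Adj w w') (hxw : G.Adj x w) (hxw' : G.Adj x w')
    (hxonly : ∀ y, G.Adj x y → y = w ∨ y = w') :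
    G.Colorable 3 := by
  classical
  have hv0mono : ∀ y, G.Adj v0 y → c y = c u0 := fun y hy => hbv0 y u0 hy hadj
  have hu0mono : ∀ y, G.Adj u0 y → c y = c v0 := fun y hy => hbu0 y v0 hy hadj.symm
  have hij : c v0 ≠ c u0 := hc hadj
  have hcw : c w = c u0 := hv0mono w hw
  have hcw' : c w' = c v0 := hu0mono w' hw'
  have nww' : w ≠ w' := fun hh => hij ((hcw'.symm.trans (hh ▸ hcw : c w' = c u0)))
  have hxv0 : x ≠ v0 := by
    rintro rfl
    exact hc hxw' hcw'.symm
  have hxu0 : x ≠ u0 := by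
    rintro rfl
    exact hc hxw hcw.symm
  have hNx : G.neighborFinset x = {w, w'} := by
    apply Finset.ext
    intro y
    rw [SimpleGraph.mem_neighborFinset]
    simp only [Finset.mem_insert, Finset.mem_singleton]
    constructor
    · exact fun hh => hxonly y hh
    · rintro (rfl | rfl)
      · exact hxw
      · exact hxw'
  have hk2 : k = 2 := by
    have h1 := hreg x
    rw [← card_neighborFinset_eq_degree, hNx, Finset.card_pair nww'] at h1
    omega
  have pairN : ∀ v a b : V, G.Adj v a → G.Adj v b → a ≠ b →
      G.neighborFinset v = {a, b} := by
    intro v a b h1 h2 h3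
    have hsub : ({a, b} : Finset V) ⊆ G.neighborFinset v := by
      intro y hy
      rcases Finset.mem_insert.mp hy with rfl | hy'
      · exact (G.mem_neighborFinset v y).mpr h1
      · rw [Finset.mem_singleton] at hy'
        subst hy'
        exact (G.mem_neighborFinset v y).mpr h2
    refine (Finset.eq_of_subset_of_card_le hsub ?_).symm
    rw [card_neighborFinset_eq_degree, hreg v, hk2, Finset.card_pair h3]
  have hNv0 : G.neighborFinset v0 = {u0, w} := pairN v0 u0 w hadj hw hwu0.symm
  have hNu0 : G.neighborFinset u0 = {v0, w'} := pairN u0 v0 w' hadj.symm hw' hw'v0.symm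
  have hNw : G.neighborFinset w = {v0, x} := pairN w v0 x hw.symm hxw.symm hxv0.symm
  have hNw' : G.neighborFinset w' = {u0, x} := pairN w' u0 x hw'.symm hxw'.symm hxu0.symm
  have hcov : ∀ y : V, y = v0 ∨ y = u0 ∨ y = w ∨ y = w' ∨ y = x := by
    intro y
    by_cases h1 : y = v0
    · exact Or.inl h1
    rcases hdiam v0 y (Ne.symm h1) with h | ⟨z, hz1, hz2⟩
    · have : y ∈ ({u0, w} : Finset V) := by
        rw [← hNv0]
        exact (G.mem_neighborFinset v0 y).mpr h
      rcases Finset.mem_insert.mp this with rfl | hy'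
      · exact Or.inr (Or.inl rfl)
      · rw [Finset.mem_singleton] at hy'
        exact Or.inr (Or.inr (Or.inl hy'))
    · have hz : z ∈ ({u0, w} : Finset V) := by
        rw [← hNv0]
        exact (G.mem_neighborFinset v0 z).mpr hz1
      rcases Finset.mem_insert.mp hz with rfl | hz'
      · have : y ∈ ({v0, w'} : Finset V) := by
          rw [← hNu0]
          exact (G.mem_neighborFinset _ y).mpr hz2
        rcases Finset.mem_insert.mp this with rfl | hy'
        · exact Or.inl rfl
        · rw [Finset.mem_singleton] at hy'
          exact Or.inr (Or.inr (Or.inr (Or.inl hy')))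
      · rw [Finset.mem_singleton] at hz'
        subst hz'
        have : y ∈ ({v0, x} : Finset V) := by
          rw [← hNw]
          exact (G.mem_neighborFinset _ y).mpr hz2
        rcases Finset.mem_insert.mp this with rfl | hy'
        · exact Or.inl rfl
        · rw [Finset.mem_singleton] at hy'
          exact Or.inr (Or.inr (Or.inr (Or.inr hy')))
  set c₃ : V → Fin 3 := fun y => if y = v0 ∨ y = w' then 0
    else if y = u0 ∨ y = w then 1 else 2 with hc3
  have n1 : u0 ≠ v0 := hadj.ne'
  have n2 : u0 ≠ w' := hw'.ne
  have n3 : w ≠ v0 := hw.ne'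
  have n4 : x ≠ w := hxw.ne
  have n5 : x ≠ w' := hxw'.ne
  have e1 : c₃ v0 = 0 := by simp [hc3]
  have e2 : c₃ w' = 0 := by simp [hc3]
  have e3 : c₃ u0 = 1 := by simp [hc3, n1, n2]
  have e4 : c₃ w = 1 := by simp [hc3, n3, nww']
  have e5 : c₃ x = 2 := by simp [hc3, hxv0, hxu0, n4, n5]
  refine ⟨SimpleGraph.Coloring.mk c₃ ?_⟩
  intro a b hab
  have hmem : ∀ p q : V, G.Adj p q → q ∈ G.neighborFinset p :=
    fun p q hpq => (G.mem_neighborFinset p q).mpr hpq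
  have hpair : ∀ {q r s : V}, q ∈ ({r, s} : Finset V) → q = r ∨ q = s := by
    intro q r s hq
    rcases Finset.mem_insert.mp hq with rfl | hq'
    · exact Or.inl rfl
    · rw [Finset.mem_singleton] at hq'
      exact Or.inr hq'
  rcases hcov a with rfl | rfl | rfl | rfl | rfl
  · rcases hpair (hNv0 ▸ hmem _ b hab) with rfl | rfl
    · rw [e1, e3]; decide
    · rw [e1, e4]; decide
  · rcases hpair (hNu0 ▸ hmem _ b hab) with rfl | rfl
    · rw [e3, e1]; decide
    · rw [e3, e2]; decide
  · rcases hpair (hNw ▸ hmem _ b hab) with rfl | rfl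
    · rw [e4, e1]; decide
    · rw [e4, e5]; decide
  · rcases hpair (hNw' ▸ hmem _ b hab) with rfl | rfl
    · rw [e2, e3]; decide
    · rw [e2, e5]; decide
  · rcases hpair (hNx ▸ hmem _ b hab) with rfl | rfl
    · rw [e5, e4]; decide
    · rw [e5, e2]; decide


set_option maxHeartbeats 1000000 in
/-- The doubly-singleton case with a good pair to recolor. -/
private lemma caseGoodPair {n : ℕ} {c : V → Fin n}
    (hc : ProperColoring G c) {v0 u0 w w' : V}
    (hbv0 : ∀ a b, G.Adj v0 a → G.Adj v0 b → c a = c b)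
    (hbu0 : ∀ a b, G.Adj u0 a → G.Adj u0 b → c a = c b)
    (hadj : G.Adj v0 u0)
    (honly : ∀ v, (∀ a b, G.Adj v a → G.Adj v b → c a = c b) → v = v0 ∨ v = u0)
    (hw : G.Adj v0 w) (hwu0 : w ≠ u0) (hw' : G.Adj u0 w') (hw'v0 : w' ≠ v0)
    (hww' : ¬ G.Adj w w')
    (hthird : ∀ z, G.Adj z w → G.Adj z w' → ∃ y, G.Adj z y ∧ y ≠ w ∧ y ≠ w') :
    ∃ c' : V → Fin (n+1), ProperColoring G c' ∧
      ∀ v, 2 ≤ G.degree v → ∃ u x, G.Adj v u ∧ G.Adj v x ∧ c' u ≠ c' x := by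
  classical
  have nu0w : ¬ (u0 = w ∨ u0 = w') := by
    rintro (rfl | rfl)
    · exact hwu0 rfl
    · exact hw'.ne rfl
  have nv0w : ¬ (v0 = w ∨ v0 = w') := by
    rintro (rfl | rfl)
    · exact hw.ne rfl
    · exact hw'v0 rfl
  refine ⟨fun y => if y = w ∨ y = w' then Fin.last n else (c y).castSucc, ?_, ?_⟩
  · intro a b hab
    dsimp only
    by_cases hA : a = w ∨ a = w' <;> by_cases hB : b = w ∨ b = w'
    · exfalso
      rcases hA with rfl | rfl <;> rcases hB with rfl | rfl
      · exact G.loopless.irrefl _ hab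
      · exact hww' hab
      · exact hww' hab.symm
      · exact G.loopless.irrefl _ hab
    · rw [if_pos hA, if_neg hB]; exact (Fin.castSucc_lt_last _).ne'
    · rw [if_neg hA, if_pos hB]; exact (Fin.castSucc_lt_last _).ne
    · rw [if_neg hA, if_neg hB]
      exact fun hh => hc hab (Fin.castSucc_inj.mp hh)
  · intro v _
    by_cases hbadv : ∀ a b, G.Adj v a → G.Adj v b → c a = c b
    · rcases honly v hbadv with rfl | rfl
      · refine ⟨w, u0, hw, hadj, ?_⟩
        dsimp only
        rw [if_pos (Or.inl rfl), if_neg nu0w]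
        exact (Fin.castSucc_lt_last _).ne'
      · refine ⟨w', v0, hw', hadj.symm, ?_⟩
        dsimp only
        rw [if_pos (Or.inr rfl), if_neg nv0w]
        exact (Fin.castSucc_lt_last _).ne'
    · push_neg at hbadv
      obtain ⟨a, b, hva, hvb, hcab⟩ := hbadv
      by_cases hA : a = w ∨ a = w' <;> by_cases hB : b = w ∨ b = w'
      · -- both recolored: N(v) contains w and w'
        have hvw : G.Adj v w ∧ G.Adj v w' := by
          rcases hA with rfl | rfl <;> rcases hB with rfl | rfl
          · exact absurd rfl hcab
          · exact ⟨hva, hvb⟩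
          · exact ⟨hvb, hva⟩
          · exact absurd rfl hcab
        obtain ⟨y, hy1, hy2, hy3⟩ := hthird v hvw.1 hvw.2
        refine ⟨w, y, hvw.1, hy1, ?_⟩
        dsimp only
        rw [if_pos (Or.inl rfl), if_neg (by rintro (rfl | rfl); exacts [hy2 rfl, hy3 rfl])]
        exact (Fin.castSucc_lt_last _).ne'
      · refine ⟨a, b, hva, hvb, ?_⟩
        dsimp only
        rw [if_pos hA, if_neg hB]
        exact (Fin.castSucc_lt_last _).ne'
      · refine ⟨a, b, hva, hvb, ?_⟩
        dsimp only
        rw [if_neg hA, if_pos hB]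
        exact (Fin.castSucc_lt_last _).ne
      · refine ⟨a, b, hva, hvb, ?_⟩
        dsimp only
        rw [if_neg hA, if_neg hB]
        exact fun hh => hcab (Fin.castSucc_inj.mp hh)

set_option maxHeartbeats 1000000 in
private lemma dynExists {k n : ℕ}
    (hdiam : ∀ u v : V, u ≠ v → G.Adj u v ∨ ∃ w, G.Adj u w ∧ G.Adj w v)
    (hreg : G.IsRegularOfDegree k) (hn : 4 ≤ n) {c : V → Fin n}
    (hc : ProperColoring G c) (h3 : ¬ G.Colorable 3) :
    ∃ c' : V → Fin (n+1), ProperColoring G c' ∧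
      ∀ v, 2 ≤ G.degree v → ∃ u w, G.Adj v u ∧ G.Adj v w ∧ c' u ≠ c' w := by
  classical
  by_cases hk : 2 ≤ k
  · by_cases hbad : ∃ v, ∀ a b, G.Adj v a → G.Adj v b → c a = c b
    · obtain ⟨vb, hbvb⟩ := hbad
      by_cases hpair : ∃ p q : V, (∀ a b, G.Adj p a → G.Adj p b → c a = c b) ∧
          (∀ a b, G.Adj q a → G.Adj q b → c a = c b) ∧ G.Adj p q
      · obtain ⟨v0, u0, hbv0, hbu0, hadj⟩ := hpair
        by_cases hex1 : ∃ v1, (∀ a b, G.Adj v1 a → G.Adj v1 b → c a = c b) ∧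
            G.Adj u0 v1 ∧ v1 ≠ v0
        · obtain ⟨v1, hb1, ha1, hn1⟩ := hex1
          exact caseB1 hdiam hreg hk hn hc hbv0 hbu0 hadj hb1 ha1 hn1
        · by_cases hex2 : ∃ u1, (∀ a b, G.Adj u1 a → G.Adj u1 b → c a = c b) ∧
              G.Adj v0 u1 ∧ u1 ≠ u0
          · obtain ⟨u1, hb1, ha1, hn1⟩ := hex2
            exact caseB1 hdiam hreg hk hn hc hbu0 hbv0 hadj.symm hb1 ha1 hn1
          · push_neg at hex1 hex2
            have honly : ∀ v, (∀ a b, G.Adj v a → G.Adj v b → c a = c b) →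
                v = v0 ∨ v = u0 := by
              intro v hv
              rcases classify hdiam hreg hk hc hbv0 hbu0 hadj v hv with
                ⟨h1, _, _⟩ | ⟨h1, _, _⟩
              · exact Or.inl (hex1 v hv h1)
              · exact Or.inr (hex2 v hv h1)
            by_cases hgood : ∃ w w', G.Adj v0 w ∧ w ≠ u0 ∧ G.Adj u0 w' ∧ w' ≠ v0 ∧
                ¬ G.Adj w w' ∧ ∀ z, G.Adj z w → G.Adj z w' →
                  ∃ y, G.Adj z y ∧ y ≠ w ∧ y ≠ w'
            · obtain ⟨w, w', h1, h2, h3', h4, h5, h6⟩ := hgood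
              exact caseGoodPair hc hbv0 hbu0 hadj honly h1 h2 h3' h4 h5 h6
            · exfalso
              apply h3
              by_cases hall : ∀ w w', G.Adj v0 w → w ≠ u0 → G.Adj u0 w' → w' ≠ v0 →
                  G.Adj w w'
              · exact colorAlpha hdiam hreg hk hc hbv0 hbu0 hadj hall
              · push_neg at hall
                obtain ⟨w, w', h1, h2, h3', h4, h5⟩ := hall
                push_neg at hgood
                have hx := hgood w w' h1 h2 h3' h4 h5
                obtain ⟨x, hxw, hxw', hxonly⟩ := hx
                refine colorBeta hdiam hreg hc hbv0 hbu0 hadj h1 h2 h3' h4 h5 hxw hxw'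
                  (fun y hy => ?_)
                by_cases hyw : y = w
                · exact Or.inl hyw
                · exact Or.inr (hxonly y hy hyw)
      · refine caseA hdiam hreg hk hc hbvb (fun u v hu hv huv => ?_)
        exact hpair ⟨u, v, hu, hv, huv⟩
    · push_neg at hbad
      refine ⟨fun y => (c y).castSucc, ?_, ?_⟩
      · intro a b hab
        exact fun hh => hc hab (Fin.castSucc_inj.mp hh)
      · intro v _
        have hv := hbad v
        obtain ⟨a, b, hva, hvb, hcab⟩ := hv
        exact ⟨a, b, hva, hvb, fun hh => hcab (Fin.castSucc_inj.mp hh)⟩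
  · refine ⟨fun y => (c y).castSucc, ?_, ?_⟩
    · intro a b hab
      exact fun hh => hc hab (Fin.castSucc_inj.mp hh)
    · intro v hv
      rw [hreg v] at hv
      exact absurd hv hk

end MyAux


set_option maxHeartbeats 1000000 in
/-- If G is k-regular, has diameter at most 2 and χ(G) ≥ 4,
then χ₂(G) − χ(G) ≤ 1. -/
theorem stmt7 {V : Type*} [Fintype V] (G : SimpleGraph V) [DecidableRel G.Adj]
    (k : ℕ) (hreg : G.IsRegularOfDegree k)
    (hdiam : ∀ u v : V, u ≠ v → G.Adj u v ∨ ∃ w, G.Adj u w ∧ G.Adj w v)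
    (h : 4 ≤ chi G) :
    dynChi G ≤ chi G + 1 := by
  classical
  have hcol : G.Colorable (chi G) :=
    Nat.sInf_mem (⟨Fintype.card V, G.colorable_of_fintype⟩ : {n | G.Colorable n}.Nonempty)
  obtain ⟨C⟩ := hcol
  have h3 : ¬ G.Colorable 3 := by
    intro h3
    have h4 : chi G ≤ 3 := Nat.sInf_le h3
    omega
  have hc : ProperColoring G (fun v => C v) := fun a b hab => C.valid hab
  obtain ⟨c', h1, h2⟩ := dynExists hdiam hreg h hc h3
  exact Nat.sInf_le (show ∃ cc : V → Fin (chi G + 1), DynColoring G cc from ⟨c', h1, h2⟩)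
end

section
/- For every integer n > 1, there exists a regular graph G with χ(G) = n and χ₂(G) > n. -/
open SimpleGraph Finset

namespace Stmt14

abbrev Vt (p : ℕ) := (Fin (3*p+4) × Fin (p+1)) ⊕ (Fin (3*p+4) × Fin (p+2)) ⊕ (Fin (p+2) × Fin (p+2))

def adj (p : ℕ) : Vt p → Vt p → Prop
  | .inl a, .inl a' => a.1 = a'.1 ∧ a.2 ≠ a'.2
  | .inl a, .inr (.inl x) => x.1 = a.1 ∨ x.1 + 1 = a.1
  | .inr (.inl x), .inl a => x.1 = a.1 ∨ x.1 + 1 = a.1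
  | .inr (.inl x), .inr (.inr w) => w.1 = x.2
  | .inr (.inr w), .inr (.inl x) => w.1 = x.2
  | _, _ => False

instance adjDec (p : ℕ) : DecidableRel (adj p) := fun u v => by
  rcases u with a | x | w <;> rcases v with a' | x' | w' <;> simp only [adj] <;> infer_instance

def Gr (p : ℕ) : SimpleGraph (Vt p) where
  Adj := adj p
  symm := by
    constructor
    rintro (a | x | w) (a' | x' | w') h <;> simp only [adj] at h ⊢
    · exact ⟨h.1.symm, fun e => h.2 e.symm⟩
    · exact h
    · exact h
    · exact h
    · exact h
  loopless := by constructor; rintro (a | x | w) h <;> simp only [adj] at h; exact h.2 rfl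

instance grDec (p : ℕ) : DecidableRel (Gr p).Adj := adjDec p

instance mNeZero (p : ℕ) : NeZero (3*p+4) := ⟨by omega⟩

lemma one_ne_zero' (p : ℕ) : (1 : Fin (3*p+4)) ≠ 0 := by
  intro h
  have := congrArg Fin.val h
  simp only [Fin.val_one', Fin.val_zero, Nat.mod_eq_of_lt (by omega : 1 < 3*p+4)] at this
  omega

lemma sub_one_ne (p : ℕ) (i : Fin (3*p+4)) : i ≠ i - 1 := by
  intro h
  have : (1 : Fin (3*p+4)) = 0 := by
    have h2 := sub_eq_self.mp h.symm
    exact h2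
  exact one_ne_zero' p this

lemma nbhd_b (p : ℕ) (i : Fin (3*p+4)) (k : Fin (p+1)) :
    (Gr p).neighborFinset (.inl (i, k)) =
      (({i} : Finset (Fin (3*p+4))) ×ˢ ({k}ᶜ : Finset (Fin (p+1)))).disjSum
        ((({i, i - 1} : Finset (Fin (3*p+4))) ×ˢ (univ : Finset (Fin (p+2)))).disjSum
          (∅ : Finset (Fin (p+2) × Fin (p+2)))) := by
  ext u
  rcases u with a | x | w
  · simp only [mem_neighborFinset]; simp only [mem_neighborFinset, Gr, adj, inl_mem_disjSum, Finset.mem_product,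
      Finset.mem_singleton, Finset.mem_compl]
    constructor
    · rintro ⟨h1, h2⟩; exact ⟨h1.symm, fun e => h2 e.symm⟩
    · rintro ⟨h1, h2⟩; exact ⟨h1.symm, fun e => h2 e.symm⟩
  · simp only [mem_neighborFinset]; simp only [mem_neighborFinset, Gr, adj, inr_mem_disjSum, inl_mem_disjSum,
      Finset.mem_product, Finset.mem_insert, Finset.mem_singleton, Finset.mem_univ, and_true]
    constructor
    · rintro (h | h)
      · exact Or.inl h
      · exact Or.inr (eq_sub_of_add_eq h)
    · rintro (h | h)
      · exact Or.inl h
      · exact Or.inr (show x.1 + 1 = i by rw [h]; exact sub_add_cancel i 1)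
  · simp only [mem_neighborFinset]; simp only [mem_neighborFinset, Gr, adj, inr_mem_disjSum, Finset.notMem_empty]

lemma nbhd_x (p : ℕ) (i : Fin (3*p+4)) (j : Fin (p+2)) :
    (Gr p).neighborFinset (.inr (.inl (i, j))) =
      (({i, i + 1} : Finset (Fin (3*p+4))) ×ˢ (univ : Finset (Fin (p+1)))).disjSum
        ((∅ : Finset (Fin (3*p+4) × Fin (p+2))).disjSum
          (({j} : Finset (Fin (p+2))) ×ˢ (univ : Finset (Fin (p+2))))) := by
  ext u
  rcases u with a | x | w
  · simp only [mem_neighborFinset]; simp only [mem_neighborFinset, Gr, adj, inl_mem_disjSum, Finset.mem_product,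
      Finset.mem_insert, Finset.mem_singleton, Finset.mem_univ, and_true]
    constructor
    · rintro (h | h)
      · exact Or.inl h.symm
      · exact Or.inr (by rw [← h])
    · rintro (h | h)
      · exact Or.inl h.symm
      · exact Or.inr h.symm
  · simp only [mem_neighborFinset]; simp only [mem_neighborFinset, Gr, adj, inr_mem_disjSum, inl_mem_disjSum,
      Finset.notMem_empty]
  · simp only [mem_neighborFinset]; simp only [mem_neighborFinset, Gr, adj, inr_mem_disjSum, Finset.mem_product,
      Finset.mem_singleton, Finset.mem_univ, and_true, eq_comm]

lemma nbhd_w (p : ℕ) (j : Fin (p+2)) (l : Fin (p+2)) :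
    (Gr p).neighborFinset (.inr (.inr (j, l))) =
      (∅ : Finset (Fin (3*p+4) × Fin (p+1))).disjSum
        ((((univ : Finset (Fin (3*p+4))) ×ˢ ({j} : Finset (Fin (p+2))))).disjSum
          (∅ : Finset (Fin (p+2) × Fin (p+2)))) := by
  ext u
  rcases u with a | x | w
  · simp only [mem_neighborFinset]; simp only [mem_neighborFinset, Gr, adj, inl_mem_disjSum, Finset.notMem_empty]
  · simp only [mem_neighborFinset]; simp only [mem_neighborFinset, Gr, adj, inr_mem_disjSum, inl_mem_disjSum,
      Finset.mem_product, Finset.mem_singleton, Finset.mem_univ, true_and]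
    exact ⟨fun h => h.symm, fun h => h.symm⟩
  · simp only [mem_neighborFinset]; simp only [mem_neighborFinset, Gr, adj, inr_mem_disjSum, Finset.notMem_empty]

lemma degree_eq (p : ℕ) (v : Vt p) : (Gr p).degree v = 3*p+4 := by
  rcases v with ⟨i, k⟩ | ⟨i, j⟩ | ⟨j, l⟩
  · rw [SimpleGraph.degree, nbhd_b]
    rw [card_disjSum, card_disjSum, card_product, card_product,
      Finset.card_pair (sub_one_ne p i)]
    simp [Finset.card_compl]
    omega
  · rw [SimpleGraph.degree, nbhd_x]
    rw [card_disjSum, card_disjSum, card_product, card_product,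
      Finset.card_pair (fun h => one_ne_zero' p (left_eq_add.mp h))]
    simp
    omega
  · rw [SimpleGraph.degree, nbhd_w]
    simp


def goodColoring (p : ℕ) : Vt p → Fin (p+2) := fun v =>
  match v with
  | .inl a => a.2.castSucc
  | .inr (.inl _) => Fin.last (p+1)
  | .inr (.inr _) => 0

lemma goodColoring_proper (p : ℕ) : ProperColoring (Gr p) (goodColoring p) := by
  rintro (a | x | w) (a' | x' | w') h <;> simp only [Gr, adj] at h <;>
    simp only [goodColoring]
  · exact fun e => h.2 (Fin.castSucc_injective _ e)
  · exact (Fin.castSucc_lt_last a.2).ne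
  · exact (Fin.castSucc_lt_last a'.2).ne'
  · intro e; have := congrArg Fin.val e; simp [Fin.val_last] at this
  · intro e; have := congrArg Fin.val e; simp [Fin.val_last] at this

-- the clique of size p+2 : vertices b(0,k) together with x(0,0)
lemma card_le_of_proper (p : ℕ) {k : ℕ} (c : Vt p → Fin k)
    (hc : ProperColoring (Gr p) c) : p + 2 ≤ k := by
  classical
  set q : Fin (p+2) → Vt p := fun t =>
    if h : (t : ℕ) < p + 1 then .inl (0, ⟨t, h⟩) else .inr (.inl (0, 0)) with hq
  have hadj : ∀ t t' : Fin (p+2), t ≠ t' → (Gr p).Adj (q t) (q t') := by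
    intro t t' hne
    simp only [hq]
    split_ifs with h1 h2 h2
    · refine ⟨rfl, fun e => hne (Fin.ext ?_)⟩
      have := congrArg Fin.val e
      simpa using this
    · exact Or.inl rfl
    · exact Or.inl rfl
    · exact absurd (Fin.ext (by omega : (t:ℕ) = (t':ℕ))) hne
  have hinj : Function.Injective (fun t => c (q t)) := by
    intro t t' h
    by_contra hne
    exact hc (hadj t t' hne) h
  simpa using Fintype.card_le_of_injective _ hinj

lemma colorable (p : ℕ) : (Gr p).Colorable (p+2) :=
  ⟨SimpleGraph.Coloring.mk (goodColoring p) (fun h => goodColoring_proper p h)⟩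

lemma chi_eq (p : ℕ) : chi (Gr p) = p + 2 := by
  refine le_antisymm (Nat.sInf_le (colorable p)) (le_csInf ⟨p+2, colorable p⟩ ?_)
  rintro k ⟨C⟩
  exact card_le_of_proper p C (fun _ _ h => C.valid h)

-- two vertices adjacent to every vertex of clique i get the same color
lemma same_color (p : ℕ) (c : Vt p → Fin (p+2)) (hc : ProperColoring (Gr p) c)
    (i : Fin (3*p+4)) (u v : Vt p)
    (hu : ∀ k, (Gr p).Adj u (.inl (i, k))) (hv : ∀ k, (Gr p).Adj v (.inl (i, k))) :
    c u = c v := by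
  classical
  set f : Fin (p+1) → Fin (p+2) := fun k => c (.inl (i, k)) with hf
  have hfinj : Function.Injective f := by
    intro a b h
    by_contra hne
    exact hc (show (Gr p).Adj (.inl (i,a)) (.inl (i,b)) from ⟨rfl, fun e => hne e⟩) h
  set T : Finset (Fin (p+2)) := Finset.univ.image f with hT
  have hTcard : T.card = p + 1 := by
    rw [hT, Finset.card_image_of_injective _ hfinj, Finset.card_univ, Fintype.card_fin]
  have hmem : ∀ z : Vt p, (∀ k, (Gr p).Adj z (.inl (i, k))) → c z ∈ Tᶜ := by
    intro z hz
    simp only [Finset.mem_compl, hT, Finset.mem_image, Finset.mem_univ, true_and, not_exists]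
    exact fun k e => hc (hz k) e.symm
  have hcard : Tᶜ.card ≤ 1 := by
    rw [Finset.card_compl, hTcard, Fintype.card_fin]
    omega
  exact Finset.card_le_one.mp hcard _ (hmem u hu) _ (hmem v hv)

lemma x_adj_clique (p : ℕ) (i : Fin (3*p+4)) (j : Fin (p+2)) (i' : Fin (3*p+4))
    (h : i = i' ∨ i + 1 = i') : ∀ k, (Gr p).Adj (.inr (.inl (i, j))) (.inl (i', k)) :=
  fun _ => h

lemma x_all (p : ℕ) (c : Vt p → Fin (p+2)) (hc : ProperColoring (Gr p) c) :
    ∀ i : Fin (3*p+4), ∀ j : Fin (p+2),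
      c (.inr (.inl (i, j))) = c (.inr (.inl (0, 0))) := by
  have step : ∀ r : ℕ, (hr : r < 3*p+4) → ∀ j : Fin (p+2),
      c (.inr (.inl (⟨r, hr⟩, j))) = c (.inr (.inl (0, 0))) := by
    intro r
    induction r with
    | zero => intro hr j
              exact same_color p c hc 0 _ _
                (x_adj_clique p 0 j 0 (Or.inl rfl)) (x_adj_clique p 0 0 0 (Or.inl rfl))
    | succ r ih =>
        intro hr j
        have hr' : r < 3*p+4 := by omega
        have key : c (.inr (.inl (⟨r+1, hr⟩, j))) = c (.inr (.inl (⟨r, hr'⟩, (0 : Fin (p+2))))) := by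
          apply same_color p c hc ⟨r+1, hr⟩
          · exact x_adj_clique p _ _ _ (Or.inl rfl)
          · apply x_adj_clique p _ _ _
            refine Or.inr ?_
            apply Fin.ext
            rw [Fin.val_add]
            simp [Fin.val_one', Nat.mod_eq_of_lt]
            omega
        rw [key, ih hr' 0]
  intro i j
  have : i = ⟨i.1, i.2⟩ := rfl
  rw [this, step i.1 i.2 j]

lemma no_dyn (p : ℕ) (c : Vt p → Fin (p+2)) : ¬ DynColoring (Gr p) c := by
  rintro ⟨hp, hd⟩
  obtain ⟨u, w, hu, hw, hne⟩ := hd (.inr (.inr (0, 0))) (by rw [degree_eq]; omega)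
  have char : ∀ z : Vt p, (Gr p).Adj (.inr (.inr ((0 : Fin (p+2)), (0 : Fin (p+2))))) z →
      ∃ i : Fin (3*p+4), z = .inr (.inl (i, 0)) := by
    rintro (a | ⟨x1, x2⟩ | w') h <;> simp only [Gr, adj] at h
    exact ⟨x1, by rw [← h]⟩
  obtain ⟨i1, h1⟩ := char u hu
  obtain ⟨i2, h2⟩ := char w hw
  rw [h1, h2, x_all p c hp i1 0, x_all p c hp i2 0] at hne
  exact hne rfl


lemma dyn_nonempty (p : ℕ) :
    ∃ c : Vt p → Fin (Fintype.card (Vt p)), DynColoring (Gr p) c := by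
  refine ⟨fun v => (Fintype.equivFin (Vt p)) v, ?_, ?_⟩
  · intro u v h e
    exact (Gr p).ne_of_adj h ((Fintype.equivFin (Vt p)).injective e)
  · intro v hv
    have h2 : 1 < ((Gr p).neighborFinset v).card := hv
    obtain ⟨u, hu, w, hw, hne⟩ := Finset.one_lt_card.mp h2
    exact ⟨u, w, (SimpleGraph.mem_neighborFinset ..).mp hu,
      (SimpleGraph.mem_neighborFinset ..).mp hw,
      fun e => hne ((Fintype.equivFin (Vt p)).injective e)⟩

lemma dynChi_gt (p : ℕ) : p + 2 < dynChi (Gr p) := by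
  have hne : {n | ∃ c : Vt p → Fin n, DynColoring (Gr p) c}.Nonempty :=
    ⟨_, dyn_nonempty p⟩
  have hmem : ∃ c : Vt p → Fin (dynChi (Gr p)), DynColoring (Gr p) c := Nat.sInf_mem hne
  obtain ⟨c, hc⟩ := hmem
  by_contra hle
  push_neg at hle
  have hc' : DynColoring (Gr p) (fun v => Fin.castLE hle (c v)) := by
    refine ⟨fun u v h e => hc.1 h (Fin.castLE_injective _ e), fun v hv => ?_⟩
    obtain ⟨u, w, h1, h2, h3⟩ := hc.2 v hv
    exact ⟨u, w, h1, h2, fun e => h3 (Fin.castLE_injective _ e)⟩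
  exact no_dyn p _ hc'

end Stmt14

/-- For every integer n > 1 there is a regular graph G with χ(G) = n
and χ₂(G) > n. -/
theorem stmt14 (n : ℕ) (hn : 1 < n) :
    ∃ (V : Type) (_ : Fintype V) (G : SimpleGraph V) (_ : DecidableRel G.Adj) (k : ℕ),
      G.IsRegularOfDegree k ∧ chi G = n ∧ n < dynChi G := by
  obtain ⟨p, rfl⟩ : ∃ p, n = p + 2 := ⟨n - 2, by omega⟩
  exact ⟨Stmt14.Vt p, inferInstance, Stmt14.Gr p, Stmt14.grDec p, 3*p+4,
    Stmt14.degree_eq p, Stmt14.chi_eq p, Stmt14.dynChi_gt p⟩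
end

section
/- If G is a graph, f is a proper coloring of G, and S is the set of 'bad' vertices of f (vertices of degree at least 2 whose neighborhood is monochromatic under f), and if f' is obtained from f by recoloring, for each w ∈ S, one chosen neighbor x(w) with a distinct new color not used by f (distinct new colors for distinct chosen vertices), then f' is a dynamic coloring of G using at most χ(G) + |S| additional colors beyond those of f. -/
open SimpleGraph Finset

/-- Let f be a proper coloring of G, S the set of its bad vertices
(degree ≥ 2 and monochromatic neighborhood), and for each w ∈ S pick a neighbor x w.
Recoloring each chosen vertex with its own brand-new color yields a dynamic coloring
using at most |S| colors more than f. -/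
theorem stmt18 {V α : Type*} [Fintype V] [DecidableEq V] [DecidableEq α]
    (G : SimpleGraph V) [DecidableRel G.Adj]
    (f : V → α) (hf : ProperColoring G f)
    (S : Finset V)
    (hS : ∀ w : V, w ∈ S ↔ 2 ≤ G.degree w ∧ ∀ u u', G.Adj w u → G.Adj w u' → f u = f u')
    (x : V → V) (hx : ∀ w ∈ S, G.Adj w (x w))
    (f' : V → α ⊕ V)
    (hf' : ∀ v : V, f' v = if v ∈ S.image x then Sum.inr v else Sum.inl (f v)) :
    DynColoring G f' ∧
      (Finset.univ.image f').card ≤ (Finset.univ.image f).card + S.card := by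
  constructor
  · constructor
    · intro u v huv
      rw [hf' u, hf' v]
      split_ifs with h1 h2 h2
      · simpa using huv.ne
      · simp
      · simp
      · simpa using hf huv
    · intro v hv
      by_cases hvS : v ∈ S
      · have hxv := hx v hvS
        have hmem : x v ∈ S.image x := Finset.mem_image_of_mem x hvS
        have h1 : 1 < (G.neighborFinset v).card := by
          rwa [G.card_neighborFinset_eq_degree]
        obtain ⟨u, hu, hne⟩ := Finset.exists_mem_ne h1 (x v)
        rw [SimpleGraph.mem_neighborFinset] at hu
        refine ⟨u, x v, hu, hxv, ?_⟩
        rw [hf' u, hf' (x v), if_pos hmem]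
        split_ifs with h
        · simpa using hne
        · simp
      · rw [hS] at hvS
        push_neg at hvS
        obtain ⟨u, u', hau, hau', hne⟩ := hvS hv
        refine ⟨u, u', hau, hau', ?_⟩
        have huu' : u ≠ u' := fun h => hne (h ▸ rfl)
        rw [hf' u, hf' u']
        split_ifs with h1 h2 h2 <;> simp [huu', hne]
  · calc (Finset.univ.image f').card
        ≤ ((Finset.univ.image f).image Sum.inl ∪ (S.image x).image Sum.inr).card := by
          apply Finset.card_le_card
          intro y hy
          simp only [Finset.mem_image, Finset.mem_univ, true_and] at hy
          obtain ⟨v, hv⟩ := hy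
          rw [hf' v] at hv
          split_ifs at hv with h
          · exact hv ▸ Finset.mem_union_right _ (Finset.mem_image_of_mem _ h)
          · exact hv ▸ Finset.mem_union_left _
              (Finset.mem_image_of_mem _ (Finset.mem_image_of_mem _ (Finset.mem_univ v)))
      _ ≤ _ := by
          refine (Finset.card_union_le _ _).trans ?_
          gcongr
          · exact le_of_eq (Finset.card_image_of_injective _ Sum.inl_injective)
          · exact (Finset.card_image_of_injective _ Sum.inr_injective).le.trans
              Finset.card_image_le
end
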